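/- arXiv:2312.13690 — 14 statements merged into one kernel-verified Lean document; each statement's English description precedes it below -/
import Mathlib

section
/- If k is odd, then the sum of all edge intersection numbers is bounded below in terms of the dimension: 4·Σ_{1 ≤ α < β ≤ k} |M_α ∩ M_β| ≥ (k−1)²·d. -/
open Finset

lemma key_ineq_edge (n m t : ℕ) (h : n + m = 2 * t + 1) :
    4 * t ^ 2 + 4 * t + 2 ≤ 2 * n ^ 2 + 2 * m ^ 2 := by
  have hne : n ≠ m := by omega
  have h' : (n : ℤ) + m = 2 * t + 1 := by exact_mod_cast h
  have hz : (n : ℤ) - m ≠ 0 := sub_ne_zero.mpr (by exact_mod_cast hne)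
  have h2 : 1 ≤ ((n : ℤ) - m) ^ 2 := by
    rcases hz.lt_or_gt with h3 | h3 <;> nlinarith
  zify
  nlinarith

/-- If `k` is odd, the sum of all edge intersection numbers is
bounded below: `4 * Σ_{α<β} |M α ∩ M β| ≥ (k-1)^2 * d`. -/
theorem edge_sum_lower_bound_odd {X : Type*} [Fintype X] [DecidableEq X]
    (d k : ℕ) (hd : 0 < d) (hk : 0 < k) (hodd : Odd k)
    (hX : Fintype.card X = 2 * d)
    (σ : X → X) (hσinv : ∀ x, σ (σ x) = x) (hσfpf : ∀ x, σ x ≠ x)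
    (M : Fin k → Finset X)
    (hM : ∀ α, ∀ x : X, x ∈ M α ↔ σ x ∉ M α) :
    4 * ∑ p ∈ univ.filter (fun p : Fin k × Fin k => p.1 < p.2), (M p.1 ∩ M p.2).card
      ≥ (k - 1) ^ 2 * d := by
  classical
  obtain ⟨t, ht⟩ := hodd
  set n : X → ℕ := fun x => (univ.filter fun α => x ∈ M α).card with hn
  -- counting functions
  have hncount : ∀ x : X, n x = ∑ α : Fin k, (if x ∈ M α then 1 else 0) := by
    intro x
    exact Finset.card_filter _ _
  -- n x + n (σ x) = k
  have hsum : ∀ x, n x + n (σ x) = k := by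
    intro x
    have hfe : (univ.filter fun α => σ x ∈ M α) = (univ.filter fun α : Fin k => ¬ x ∈ M α) := by
      apply filter_congr
      intro α _
      constructor
      · intro h hx
        exact (hM α x).mp hx h
      · intro hx
        have h2 := hM α (σ x)
        rw [hσinv] at h2
        exact h2.mpr hx
    have := Finset.card_filter_add_card_filter_not
      (s := (univ : Finset (Fin k))) (p := fun α => x ∈ M α)
    simp only [hn, hfe]
    simpa using this
  -- double counting : total sum over all pairs
  have hcard : ∀ α β : Fin k, (M α ∩ M β).card
      = ∑ x : X, (if x ∈ M α then 1 else 0) * (if x ∈ M β then 1 else 0) := by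
    intro α β
    have hpt : ∀ x : X, (if x ∈ M α then 1 else 0) * (if x ∈ M β then 1 else 0)
        = if x ∈ M α ∩ M β then 1 else 0 := by
      intro x
      by_cases h1 : x ∈ M α <;> by_cases h2 : x ∈ M β <;> simp [h1, h2]
    rw [Finset.sum_congr rfl fun x _ => hpt x]
    rw [← Finset.card_filter]
    congr 1
    ext x; simp
  have hA : ∑ p : Fin k × Fin k, (M p.1 ∩ M p.2).card = ∑ x : X, n x * n x := by
    rw [Fintype.sum_prod_type]
    have : ∀ α : Fin k, ∑ β : Fin k, (M α ∩ M β).card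
        = ∑ x : X, (if x ∈ M α then 1 else 0) * n x := by
      intro α
      simp only [hcard]
      rw [Finset.sum_comm]
      refine Finset.sum_congr rfl fun x _ => ?_
      rw [← Finset.mul_sum, hncount x]
    rw [Finset.sum_congr rfl fun α _ => this α, Finset.sum_comm]
    refine Finset.sum_congr rfl fun x _ => ?_
    rw [← Finset.sum_mul, ← hncount x]
  -- split total sum into lt, eq, gt parts
  set g : Fin k × Fin k → ℕ := fun p => (M p.1 ∩ M p.2).card with hg
  set S : ℕ := ∑ p ∈ univ.filter (fun p : Fin k × Fin k => p.1 < p.2), g p with hS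
  have hsplit1 := Finset.sum_filter_add_sum_filter_not
    (univ : Finset (Fin k × Fin k)) (fun p => p.1 < p.2) g
  have hsplit2 := Finset.sum_filter_add_sum_filter_not
    ((univ : Finset (Fin k × Fin k)).filter fun p => ¬ p.1 < p.2) (fun p => p.1 = p.2) g
  have heqset : ((univ : Finset (Fin k × Fin k)).filter fun p => ¬ p.1 < p.2).filter
      (fun p => p.1 = p.2) = (univ : Finset (Fin k × Fin k)).filter fun p => p.1 = p.2 := by
    ext ⟨a, b⟩
    simp only [Finset.mem_filter, Finset.filter_filter, Finset.mem_univ, true_and]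
    constructor
    · rintro ⟨_, h⟩; exact h
    · intro h; exact ⟨by simp [h], h⟩
  have hgtset : ((univ : Finset (Fin k × Fin k)).filter fun p => ¬ p.1 < p.2).filter
      (fun p => ¬ p.1 = p.2) = (univ : Finset (Fin k × Fin k)).filter fun p => p.2 < p.1 := by
    ext ⟨a, b⟩
    simp only [Finset.mem_filter, Finset.filter_filter, Finset.mem_univ, true_and,
      Fin.lt_def, Fin.ext_iff]
    omega
  -- gt sum equals lt sum by symmetry
  have hgt : ∑ p ∈ (univ : Finset (Fin k × Fin k)).filter (fun p => p.2 < p.1), g p = S := by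
    rw [hS]
    apply Finset.sum_nbij' (i := fun p => Prod.swap p) (j := fun p => Prod.swap p)
    · intro p hp; simp only [Finset.mem_filter, Finset.mem_univ, true_and] at hp ⊢; exact hp
    · intro p hp; simp only [Finset.mem_filter, Finset.mem_univ, true_and] at hp ⊢; exact hp
    · intro p _; simp
    · intro p _; simp
    · intro p _; simp [hg, Finset.inter_comm]
  -- diagonal sum
  have hdiag : ∑ p ∈ (univ : Finset (Fin k × Fin k)).filter (fun p => p.1 = p.2), g p
      = ∑ x : X, n x := by
    have h1 : ∑ p ∈ (univ : Finset (Fin k × Fin k)).filter (fun p => p.1 = p.2), g p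
        = ∑ α : Fin k, (M α).card := by
      apply Finset.sum_nbij' (i := fun p => p.1) (j := fun α => (α, α))
      · intro p _; simp
      · intro α _; simp
      · intro p hp
        simp only [Finset.mem_filter, Finset.mem_univ, true_and] at hp
        exact Prod.ext rfl hp
      · intro α _; rfl
      · intro p hp
        simp only [Finset.mem_filter, Finset.mem_univ, true_and] at hp
        simp [hg, ← hp, Finset.inter_self]
    rw [h1]
    have h2 : ∀ α : Fin k, (M α).card = ∑ x : X, (if x ∈ M α then 1 else 0) := by
      intro α
      rw [← Finset.card_filter]
      congr 1
      ext x; simp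
    rw [Finset.sum_congr rfl fun α _ => h2 α, Finset.sum_comm]
    exact Finset.sum_congr rfl fun x _ => (hncount x).symm
  -- so : ∑ x, n x * n x = 2 S + ∑ x, n x
  have htotal : ∑ x : X, n x * n x = 2 * S + ∑ x : X, n x := by
    have e2 : ∑ p ∈ (univ : Finset (Fin k × Fin k)).filter (fun p => ¬ p.1 < p.2), g p
        = (∑ x : X, n x) + S := by
      rw [← hsplit2, heqset, hgtset, hgt, hdiag]
    have e1 : ∑ p : Fin k × Fin k, g p = S + ((∑ x : X, n x) + S) := by
      rw [← hsplit1, e2, hS]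
    rw [← hA, e1]
    ring
  -- sum of n x over X equals k * d  (since n x + n σx = k, pairing)
  have hbij : ∀ f : ℕ → ℕ, ∑ x : X, f (n (σ x)) = ∑ x : X, f (n x) := by
    intro f
    exact Fintype.sum_bijective σ (Function.Involutive.bijective fun x => hσinv x) _ _
      (fun x => rfl)
  have hB2 : 2 * ∑ x : X, n x = 2 * d * k := by
    have : ∑ x : X, (n x + n (σ x)) = ∑ x : X, k :=
      Finset.sum_congr rfl fun x _ => hsum x
    rw [Finset.sum_add_distrib, hbij (fun m => m)] at this
    simp only [Finset.sum_const, Finset.card_univ, hX, smul_eq_mul] at this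
    omega
  -- key pointwise inequality summed
  have hkey : 2 * d * (4 * t ^ 2 + 4 * t + 2) ≤ 4 * ∑ x : X, n x * n x := by
    have hpt : ∀ x : X, 4 * t ^ 2 + 4 * t + 2 ≤ 2 * (n x) ^ 2 + 2 * (n (σ x)) ^ 2 := by
      intro x
      exact key_ineq_edge _ _ _ (by rw [hsum x, ht])
    calc 2 * d * (4 * t ^ 2 + 4 * t + 2)
        = ∑ _x : X, (4 * t ^ 2 + 4 * t + 2) := by
          rw [Finset.sum_const, Finset.card_univ, hX, smul_eq_mul]
      _ ≤ ∑ x : X, (2 * (n x) ^ 2 + 2 * (n (σ x)) ^ 2) :=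
          Finset.sum_le_sum fun x _ => hpt x
      _ = 4 * ∑ x : X, n x * n x := by
          rw [Finset.sum_add_distrib, ← Finset.mul_sum, ← Finset.mul_sum,
            hbij (fun m => m ^ 2)]
          have : ∑ x : X, (n x) ^ 2 = ∑ x : X, n x * n x :=
            Finset.sum_congr rfl fun x _ => sq (n x) ▸ by ring
          rw [this]; ring
  -- finish
  have hSb : d * t ^ 2 ≤ S := by nlinarith [htotal, hB2, hkey]
  have hk1 : k - 1 = 2 * t := by omega
  rw [hk1]
  calc (2 * t) ^ 2 * d = 4 * (d * t ^ 2) := by ring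
    _ ≤ 4 * S := by omega
end

section
/- Suppose k is odd with k ≥ 3, and suppose that for all 1 ≤ α < β ≤ k the edge intersection numbers satisfy |M_α ∩ M_β| ≤ d − 4 (as an inequality of integers). Then (k+1)·d ≥ 8k, equivalently k·(d−8) + d ≥ 0. -/
open Finset

/-- If `k` is odd, `k ≥ 3`, and all edge intersection numbers satisfy
`|M α ∩ M β| ≤ d - 4` (as integers), then `(k+1) * d ≥ 8 * k`. -/
theorem edge_constraint_odd {X : Type*} [Fintype X] [DecidableEq X]
    (d k : ℕ) (hd : 0 < d) (hk : 3 ≤ k) (hodd : Odd k)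
    (hX : Fintype.card X = 2 * d)
    (σ : X → X) (hσinv : ∀ x, σ (σ x) = x) (hσfpf : ∀ x, σ x ≠ x)
    (M : Fin k → Finset X)
    (hM : ∀ α, ∀ x : X, x ∈ M α ↔ σ x ∉ M α)
    (he : ∀ α β : Fin k, α < β → ((M α ∩ M β).card : ℤ) ≤ (d : ℤ) - 4) :
    (k + 1) * d ≥ 8 * k := by
  have hσinj : Function.Injective σ := Function.LeftInverse.injective hσinv
  -- each M α has exactly d elements
  have hcard : ∀ α, (M α).card = d := by
    intro α
    have hcompl : (M α)ᶜ = (M α).image σ := by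
      ext x
      simp only [Finset.mem_compl, Finset.mem_image]
      constructor
      · intro hx
        refine ⟨σ x, ?_, hσinv x⟩
        rw [hM α (σ x), hσinv]
        exact hx
      · rintro ⟨y, hy, rfl⟩
        exact (hM α y).mp hy
    have h1 : ((M α)ᶜ).card = ((M α).image σ).card := by rw [hcompl]
    rw [Finset.card_compl, Finset.card_image_of_injective _ hσinj, hX] at h1
    have h2 : (M α).card ≤ 2 * d := by
      have := Finset.card_le_univ (M α); rwa [hX] at this
    omega
  set f : Fin k → X → ℤ := fun α x => if x ∈ M α then 1 else -1 with hf
  -- inner products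
  have key : ∀ α β : Fin k, ∑ x : X, f α x * f β x
      = 4 * ((M α ∩ M β).card : ℤ) - 2 * d := by
    intro α β
    have hpt : ∀ x : X, f α x * f β x =
        4 * (if x ∈ M α ∩ M β then (1:ℤ) else 0)
        - 2 * (if x ∈ M α then (1:ℤ) else 0)
        - 2 * (if x ∈ M β then (1:ℤ) else 0) + 1 := by
      intro x
      simp only [hf, Finset.mem_inter]
      by_cases h1 : x ∈ M α <;> by_cases h2 : x ∈ M β <;> simp [h1, h2]
    rw [Finset.sum_congr rfl fun x _ => hpt x]
    have s1 : ∑ x : X, (if x ∈ M α ∩ M β then (1:ℤ) else 0) = ((M α ∩ M β).card : ℤ) := by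
      simp only [Finset.sum_boole]
      have hfil : Finset.filter (fun x => x ∈ M α ∩ M β) Finset.univ = M α ∩ M β := by
        ext x; simp
      rw [hfil]
    have s2 : ∑ x : X, (if x ∈ M α then (1:ℤ) else 0) = ((M α).card : ℤ) := by simp
    have s3 : ∑ x : X, (if x ∈ M β then (1:ℤ) else 0) = ((M β).card : ℤ) := by simp
    have s4 : ∑ _x : X, (1:ℤ) = (2 * d : ℤ) := by
      simp [Finset.card_univ, hX]
    simp only [Finset.sum_add_distrib, Finset.sum_sub_distrib, ← Finset.mul_sum,
      s1, s2, s3, s4, hcard]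
    push_cast
    ring
  -- off-diagonal bound
  have hoff : ∀ α β : Fin k, α ≠ β →
      ∑ x : X, f α x * f β x ≤ 2 * (d:ℤ) - 16 := by
    intro α β hne
    rcases lt_or_gt_of_ne hne with h | h
    · have := he α β h
      rw [key α β]; linarith
    · have := he β α h
      rw [key α β, Finset.inter_comm]; linarith
  -- lower bound on the norm square
  set g : X → ℤ := fun x => ∑ α, f α x with hg
  have hglb : (2 * d : ℤ) ≤ ∑ x : X, (g x)^2 := by
    have hterm : ∀ x : X, (1:ℤ) ≤ (g x)^2 := by
      intro x
      have hrep : g x = 2 * (∑ α, (if x ∈ M α then (1:ℤ) else 0)) - k := by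
        simp only [hg, hf]
        calc ∑ α : Fin k, (if x ∈ M α then (1:ℤ) else -1)
            = ∑ α : Fin k, (2 * (if x ∈ M α then (1:ℤ) else 0) - 1) := by
              apply Finset.sum_congr rfl; intro α _; by_cases h : x ∈ M α <;> simp [h]
          _ = (∑ α : Fin k, 2 * (if x ∈ M α then (1:ℤ) else 0)) - k := by
              rw [Finset.sum_sub_distrib]; simp
          _ = _ := by rw [← Finset.mul_sum]

      have hne : g x ≠ 0 := by
        rcases hodd with ⟨m, hm⟩
        intro h0
        rw [hrep] at h0
        have : (k:ℤ) = 2 * m + 1 := by exact_mod_cast congrArg Nat.cast hm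
        omega
      have h1 : 1 ≤ |g x| := Int.one_le_abs hne
      calc (1:ℤ) = 1 * 1 := by ring
        _ ≤ |g x| * |g x| := mul_le_mul h1 h1 (by norm_num) (by positivity)
        _ = (g x)^2 := by rw [← abs_mul, abs_mul_self, sq]
    calc (2 * d : ℤ) = ∑ _x : X, (1:ℤ) := by simp [Finset.card_univ, hX]
      _ ≤ ∑ x : X, (g x)^2 := Finset.sum_le_sum fun x _ => hterm x
  -- expand the norm square
  have hexpand : ∑ x : X, (g x)^2 = ∑ α : Fin k, ∑ β : Fin k, ∑ x : X, f α x * f β x := by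
    have : ∀ x : X, (g x)^2 = ∑ α : Fin k, ∑ β : Fin k, f α x * f β x := by
      intro x
      rw [hg, sq, Finset.sum_mul_sum]
    rw [Finset.sum_congr rfl fun x _ => this x]
    rw [Finset.sum_comm]
    apply Finset.sum_congr rfl
    intro α _
    rw [Finset.sum_comm]
  -- upper bound
  have hub : ∑ α : Fin k, ∑ β : Fin k, ∑ x : X, f α x * f β x
      ≤ (k:ℤ) * (2 * d) + (k:ℤ) * ((k:ℤ) - 1) * (2 * d - 16) := by
    have hstep : ∑ α : Fin k, ∑ β : Fin k, ∑ x : X, f α x * f β x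
        ≤ ∑ α : Fin k, ∑ β : Fin k, (if α = β then 2 * (d:ℤ) else 2 * d - 16) := by
      apply Finset.sum_le_sum; intro α _
      apply Finset.sum_le_sum; intro β _
      by_cases h : α = β
      · subst h
        rw [if_pos rfl, key α α]
        have h1 : ((M α ∩ M α).card : ℤ) = d := by
          rw [Finset.inter_self, hcard]
        rw [h1]; linarith
      · rw [if_neg h]; exact hoff α β h
    refine hstep.trans_eq ?_
    have hin : ∀ α : Fin k, ∑ β : Fin k, (if α = β then 2 * (d:ℤ) else 2 * d - 16)
        = (2 * d - 16) * k + 16 := by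
      intro α
      have : ∀ β : Fin k, (if α = β then 2 * (d:ℤ) else 2 * d - 16)
          = (2 * d - 16) + (if α = β then (16:ℤ) else 0) := by
        intro β; by_cases h : α = β <;> simp [h]
      rw [Finset.sum_congr rfl fun β _ => this β, Finset.sum_add_distrib]
      simp [Finset.sum_ite_eq, mul_comm]
      ring
    rw [Finset.sum_congr rfl fun α _ => hin α]
    simp [Finset.sum_add_distrib]
    ring
  -- conclude
  have hfin : (2 * d : ℤ) ≤ (k:ℤ) * (2 * d) + (k:ℤ) * ((k:ℤ) - 1) * (2 * d - 16) := by
    calc (2 * d : ℤ) ≤ ∑ x : X, (g x)^2 := hglb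
      _ = _ := hexpand
      _ ≤ _ := hub
  have hk3 : (3:ℤ) ≤ (k:ℤ) := by exact_mod_cast hk
  have : (8:ℤ) * k ≤ ((k:ℤ) + 1) * d := by nlinarith
  have := this
  zify
  linarith
end

section
/- If k is even, then the sum of all edge intersection numbers is bounded below in terms of the dimension: 4·Σ_{1 ≤ α < β ≤ k} |M_α ∩ M_β| ≥ k·(k−2)·d. -/
open Finset

/-- Per-pair numeric bound: if `a + b = m + 2` then
`(m+2)*m ≤ 2*(a*(a-1) + b*(b-1))`. -/
lemma pair_bound_aux (m a b : ℕ) (hab : a + b = m + 2) :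
    (m + 2) * m ≤ 2 * (a * (a - 1) + b * (b - 1)) := by
  rcases Nat.eq_zero_or_pos a with rfl | ha
  · simp only [Nat.zero_add] at hab
    subst hab
    simp only [Nat.add_sub_cancel, Nat.zero_mul, Nat.zero_add,
      show m + 2 - 1 = m + 1 from rfl]
    nlinarith
  rcases Nat.eq_zero_or_pos b with rfl | hb
  · simp only [Nat.add_zero] at hab
    subst hab
    simp only [Nat.add_sub_cancel, Nat.zero_mul, Nat.add_zero,
      show m + 2 - 1 = m + 1 from rfl]
    nlinarith
  · have ha' : 1 ≤ a := ha
    have hb' : 1 ≤ b := hb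
    zify [ha', hb']
    nlinarith [sq_nonneg ((a : ℤ) - b)]

/-- If `k` is even, the sum of all edge intersection numbers is
bounded below: `4 * Σ_{α<β} |M α ∩ M β| ≥ k * (k-2) * d`. -/
theorem edge_sum_lower_bound_even {X : Type*} [Fintype X] [DecidableEq X]
    (d k : ℕ) (hd : 0 < d) (hk : 0 < k) (heven : Even k)
    (hX : Fintype.card X = 2 * d)
    (σ : X → X) (hσinv : ∀ x, σ (σ x) = x) (hσfpf : ∀ x, σ x ≠ x)
    (M : Fin k → Finset X)
    (hM : ∀ α, ∀ x : X, x ∈ M α ↔ σ x ∉ M α) :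
    4 * ∑ p ∈ univ.filter (fun p : Fin k × Fin k => p.1 < p.2), (M p.1 ∩ M p.2).card
      ≥ k * (k - 2) * d := by
  classical
  obtain ⟨m, rfl⟩ : ∃ m, k = m + 2 := by
    rcases heven with ⟨t, ht⟩
    exact ⟨k - 2, by omega⟩
  set n : X → ℕ := fun x => (univ.filter fun α : Fin (m + 2) => x ∈ M α).card with hn
  -- complementary counts
  have hcompl : ∀ x : X, n x + n (σ x) = m + 2 := by
    intro x
    have h1 : (univ.filter fun α : Fin (m + 2) => σ x ∈ M α)
        = (univ.filter fun α : Fin (m + 2) => ¬ x ∈ M α) := by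
      apply filter_congr
      intro α _
      have := hM α x
      tauto
    show (univ.filter fun α : Fin (m + 2) => x ∈ M α).card
        + (univ.filter fun α : Fin (m + 2) => σ x ∈ M α).card = m + 2
    rw [h1]
    have h2 := Finset.card_filter_add_card_filter_not
      (s := (univ : Finset (Fin (m + 2)))) (p := fun α => x ∈ M α)
    simpa using h2
  have hσbij : Function.Bijective σ := Function.Involutive.bijective hσinv
  -- Step A : sum over offDiag
  have claim1 : ∑ p ∈ (univ : Finset (Fin (m + 2))).offDiag, (M p.1 ∩ M p.2).card
      = ∑ x : X, n x * (n x - 1) := by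
    have hcard : ∀ p : Fin (m + 2) × Fin (m + 2),
        (M p.1 ∩ M p.2).card = ∑ x : X, (if x ∈ M p.1 ∧ x ∈ M p.2 then 1 else 0) := by
      intro p
      rw [← Finset.card_filter]
      congr 1
      ext x
      simp [Finset.mem_inter]
    calc ∑ p ∈ (univ : Finset (Fin (m + 2))).offDiag, (M p.1 ∩ M p.2).card
        = ∑ p ∈ (univ : Finset (Fin (m + 2))).offDiag,
            ∑ x : X, (if x ∈ M p.1 ∧ x ∈ M p.2 then 1 else 0) :=
          Finset.sum_congr rfl fun p _ => hcard p
      _ = ∑ x : X, ∑ p ∈ (univ : Finset (Fin (m + 2))).offDiag,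
            (if x ∈ M p.1 ∧ x ∈ M p.2 then 1 else 0) := Finset.sum_comm
      _ = ∑ x : X, n x * (n x - 1) := by
          apply Finset.sum_congr rfl
          intro x _
          rw [← Finset.card_filter]
          have heq : ((univ : Finset (Fin (m + 2))).offDiag.filter
              fun p => x ∈ M p.1 ∧ x ∈ M p.2)
              = ((univ : Finset (Fin (m + 2))).filter fun α => x ∈ M α).offDiag := by
            ext p
            simp only [Finset.mem_filter, Finset.mem_offDiag, Finset.mem_univ, true_and]
            tauto
          rw [heq, Finset.offDiag_card]
          exact ((Nat.mul_pred (n x) (n x)) ▸ rfl : n x * n x - n x = n x * (n x - 1)).symm ▸ rfl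
  -- Step B : 2 * S = offDiag sum
  have claim2 : 2 * ∑ p ∈ univ.filter (fun p : Fin (m + 2) × Fin (m + 2) => p.1 < p.2),
        (M p.1 ∩ M p.2).card
      = ∑ p ∈ (univ : Finset (Fin (m + 2))).offDiag, (M p.1 ∩ M p.2).card := by
    have hswap : ∑ p ∈ univ.filter (fun p : Fin (m + 2) × Fin (m + 2) => p.2 < p.1),
        (M p.1 ∩ M p.2).card
        = ∑ p ∈ univ.filter (fun p : Fin (m + 2) × Fin (m + 2) => p.1 < p.2),
        (M p.1 ∩ M p.2).card := by
      apply Finset.sum_nbij' (fun p => Prod.swap p) (fun p => Prod.swap p)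
      · intro p hp; simp only [Finset.mem_filter, Finset.mem_univ, true_and] at hp ⊢
        exact hp
      · intro p hp; simp only [Finset.mem_filter, Finset.mem_univ, true_and] at hp ⊢
        exact hp
      · intro p _; simp
      · intro p _; simp
      · intro p _; simp [Finset.inter_comm]
    have hunion : (univ : Finset (Fin (m + 2))).offDiag
        = (univ.filter (fun p : Fin (m + 2) × Fin (m + 2) => p.1 < p.2))
          ∪ (univ.filter (fun p : Fin (m + 2) × Fin (m + 2) => p.2 < p.1)) := by
      ext p
      simp only [Finset.mem_offDiag, Finset.mem_union, Finset.mem_filter,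
        Finset.mem_univ, true_and]
      constructor
      · exact fun h => lt_or_gt_of_ne h
      · rintro (h | h)
        · exact ne_of_lt h
        · exact (ne_of_lt h).symm
    have hdisj : Disjoint
        (univ.filter (fun p : Fin (m + 2) × Fin (m + 2) => p.1 < p.2))
        (univ.filter (fun p : Fin (m + 2) × Fin (m + 2) => p.2 < p.1)) := by
      apply Finset.disjoint_left.mpr
      intro p hp hq
      simp only [Finset.mem_filter] at hp hq
      exact absurd hq.2 (not_lt.mpr hp.2.le)
    rw [hunion, Finset.sum_union hdisj, hswap, two_mul]
  -- Step C : pair x with σ x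
  have hperm : ∑ x : X, n (σ x) * (n (σ x) - 1) = ∑ x : X, n x * (n x - 1) :=
    Fintype.sum_bijective σ hσbij _ _ (fun x => rfl)
  have key : 2 * (4 * ∑ p ∈ univ.filter (fun p : Fin (m + 2) × Fin (m + 2) => p.1 < p.2),
      (M p.1 ∩ M p.2).card) ≥ 2 * ((m + 2) * m * d) := by
    have h1 : 4 * ∑ p ∈ univ.filter (fun p : Fin (m + 2) × Fin (m + 2) => p.1 < p.2),
        (M p.1 ∩ M p.2).card = 2 * ∑ x : X, n x * (n x - 1) := by
      rw [show (4 : ℕ) = 2 * 2 by norm_num, mul_assoc, claim2, claim1]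
    rw [h1]
    calc 2 * (2 * ∑ x : X, n x * (n x - 1))
        = ∑ x : X, 2 * (n x * (n x - 1) + n (σ x) * (n (σ x) - 1)) := by
          rw [← Finset.mul_sum, Finset.sum_add_distrib, hperm]; ring
      _ ≥ ∑ x : X, (m + 2) * m := by
          apply Finset.sum_le_sum
          intro x _
          exact pair_bound_aux m (n x) (n (σ x)) (hcompl x)
      _ = 2 * d * ((m + 2) * m) := by
          rw [Finset.sum_const, Finset.card_univ, hX, smul_eq_mul]
      _ = 2 * ((m + 2) * m * d) := by ring
  have hfin := Nat.le_of_mul_le_mul_left key (by norm_num)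
  simpa [Nat.add_sub_cancel] using hfin
end

section
/- If k is odd, then the sum of all tetrahedral intersection numbers is bounded below in terms of the dimension: Σ_{1 ≤ α < β < γ < δ ≤ k} |M_α ∩ M_β ∩ M_γ ∩ M_δ| ≥ (C((k+1)/2, 4) + C((k−1)/2, 4))·d, where C(m,4) denotes the binomial coefficient m choose 4. -/
open Finset


lemma choose4_convex : ∀ a b p q : ℕ, q ≤ p → p ≤ a → a + b = p + q →
    p.choose 4 + q.choose 4 ≤ a.choose 4 + b.choose 4 := by
  intro a
  induction a with
  | zero =>
    intro b p q h1 h2 h3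
    obtain rfl : p = 0 := by omega
    obtain rfl : q = 0 := by omega
    obtain rfl : b = 0 := by omega
    simp
  | succ n ih =>
    intro b p q h1 h2 h3
    rcases Nat.lt_or_ge p (n+1) with h | h
    · have key := ih (b+1) p q h1 (by omega) (by omega)
      have e1 : (n+1).choose 4 = n.choose 3 + n.choose 4 := Nat.choose_succ_succ n 3
      have e2 : (b+1).choose 4 = b.choose 3 + b.choose 4 := Nat.choose_succ_succ b 3
      have h4 : b.choose 3 ≤ n.choose 3 := Nat.choose_le_choose 3 (by omega)
      omega
    · obtain rfl : p = n+1 := by omega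
      obtain rfl : b = q := by omega
      omega

lemma choose4_pair (k a b : ℕ) (hodd : Odd k) (hab : a + b = k) :
    ((k+1)/2).choose 4 + ((k-1)/2).choose 4 ≤ a.choose 4 + b.choose 4 := by
  obtain ⟨m, rfl⟩ := hodd
  have hp : (2*m+1+1)/2 = m+1 := by omega
  have hq : (2*m+1-1)/2 = m := by omega
  rw [hp, hq]
  rcases le_total b a with h | h
  · exact choose4_convex a b (m+1) m (by omega) (by omega) (by omega)
  · rw [add_comm (a.choose 4)]
    exact choose4_convex b a (m+1) m (by omega) (by omega) (by omega)

lemma exists_sort_four {ι : Type*} [LinearOrder ι] (s : Finset ι) (h : s.card = 4) :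
    ∃ a b c d : ι, a < b ∧ b < c ∧ c < d ∧ s.sort (·≤·) = [a,b,c,d] := by
  have hl : (s.sort (·≤·)).length = 4 := by rw [Finset.length_sort]; exact h
  have hs : (s.sort (·≤·)).Pairwise (·<·) := (Finset.sortedLT_sort s).pairwise
  rcases hl' : s.sort (·≤·) with _ | ⟨a, _ | ⟨b, _ | ⟨c, _ | ⟨d, t⟩⟩⟩⟩ <;>
      rw [hl'] at hl hs <;> simp at hl
  obtain rfl : t = [] := by simpa using hl
  simp [List.pairwise_cons] at hs
  exact ⟨a, b, c, d, hs.1.1, hs.2.1.1, hs.2.2, rfl⟩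

/-- If `k` is odd, the sum of all tetrahedral intersection numbers is
bounded below:
`Σ_{α<β<γ<δ} |M α ∩ M β ∩ M γ ∩ M δ| ≥ (C((k+1)/2, 4) + C((k-1)/2, 4)) * d`. -/
theorem tetrahedral_sum_lower_bound_odd {X : Type*} [Fintype X] [DecidableEq X]
    (d k : ℕ) (hd : 0 < d) (hk : 0 < k) (hodd : Odd k)
    (hX : Fintype.card X = 2 * d)
    (σ : X → X) (hσinv : ∀ x, σ (σ x) = x) (hσfpf : ∀ x, σ x ≠ x)
    (M : Fin k → Finset X)
    (hM : ∀ α, ∀ x : X, x ∈ M α ↔ σ x ∉ M α) :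
    ∑ q ∈ univ.filter
        (fun q : Fin k × Fin k × Fin k × Fin k =>
          q.1 < q.2.1 ∧ q.2.1 < q.2.2.1 ∧ q.2.2.1 < q.2.2.2),
        (M q.1 ∩ M q.2.1 ∩ M q.2.2.1 ∩ M q.2.2.2).card
      ≥ (Nat.choose ((k + 1) / 2) 4 + Nat.choose ((k - 1) / 2) 4) * d := by
  classical
  set z : Fin k := ⟨0, hk⟩ with hz
  -- per-element lower bound on the number of good quadruples containing x
  have key : ∀ x : X,
      ((univ.filter (fun α => x ∈ M α)).card).choose 4 ≤
      (univ.filter (fun q : Fin k × Fin k × Fin k × Fin k =>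
        (q.1 < q.2.1 ∧ q.2.1 < q.2.2.1 ∧ q.2.2.1 < q.2.2.2) ∧
        (x ∈ M q.1 ∧ x ∈ M q.2.1 ∧ x ∈ M q.2.2.1 ∧ x ∈ M q.2.2.2))).card := by
    intro x
    set A := univ.filter (fun α => x ∈ M α) with hA
    rw [← Finset.card_powersetCard]
    apply Finset.card_le_card_of_injOn
      (fun s => ((s.sort (·≤·)).getD 0 z, (s.sort (·≤·)).getD 1 z,
        (s.sort (·≤·)).getD 2 z, (s.sort (·≤·)).getD 3 z))
    · intro s hs
      rw [Finset.mem_coe, Finset.mem_powersetCard] at hs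
      obtain ⟨hsub, hcard⟩ := hs
      obtain ⟨a, b, c, e, hab, hbc, hce, hsort⟩ := exists_sort_four s hcard
      have hmem : ∀ y, y ∈ ({a, b, c, e} : Finset (Fin k)) → x ∈ M y := by
        intro y hy
        have : y ∈ s := by
          rw [← Finset.mem_sort (α := Fin k) (·≤·), hsort]
          simpa using hy
        have := hsub this
        rw [hA, Finset.mem_filter] at this
        exact this.2
      simp only [hsort, Finset.mem_coe, Finset.mem_filter, Finset.mem_univ, true_and]
      refine ⟨⟨hab, hbc, hce⟩, ?_, ?_, ?_, ?_⟩ <;> apply hmem <;> simp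
    · intro s hs s' hs' heq
      rw [Finset.mem_coe, Finset.mem_powersetCard] at hs hs'
      obtain ⟨a, b, c, e, _, _, _, h1⟩ := exists_sort_four s hs.2
      obtain ⟨a', b', c', e', _, _, _, h2⟩ := exists_sort_four s' hs'.2
      simp only [h1, h2, List.getD_cons_zero, List.getD_cons_succ,
        Prod.mk.injEq] at heq
      obtain ⟨rfl, rfl, rfl, rfl⟩ := heq
      have hss : s.sort (·≤·) = s'.sort (·≤·) := by rw [h1, h2]
      calc s = (s.sort (·≤·)).toFinset := (Finset.sort_toFinset _ _).symm
        _ = (s'.sort (·≤·)).toFinset := by rw [hss]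
        _ = s' := Finset.sort_toFinset _ _
  -- expand each intersection cardinality as a sum over X
  have expand : ∀ q : Fin k × Fin k × Fin k × Fin k,
      (M q.1 ∩ M q.2.1 ∩ M q.2.2.1 ∩ M q.2.2.2).card =
      ∑ x : X, if x ∈ M q.1 ∧ x ∈ M q.2.1 ∧ x ∈ M q.2.2.1 ∧ x ∈ M q.2.2.2
        then 1 else 0 := by
    intro q
    rw [← Finset.card_filter]
    congr 1
    ext y
    simp only [Finset.mem_inter, Finset.mem_filter, Finset.mem_univ, true_and]
    tauto
  have hσinj : Function.Injective σ := fun a b h => by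
    rw [← hσinv a, h, hσinv]
  -- n x + n (σ x) = k
  have hnk : ∀ x : X, (univ.filter (fun α => x ∈ M α)).card
      + (univ.filter (fun α => σ x ∈ M α)).card = k := by
    intro x
    have hcompl : (univ.filter (fun α => σ x ∈ M α))
        = (univ.filter (fun α => ¬ x ∈ M α)) := by
      apply Finset.filter_congr
      intro α _
      constructor
      · intro h hx
        exact (hM α x).mp hx h
      · intro h
        by_contra h2
        exact h ((hM α x).mpr h2)
    rw [hcompl, Finset.card_filter_add_card_filter_not]
    exact Finset.card_fin k
  -- partition of X by M z
  have hdisj : Disjoint (M z) ((M z).image σ) := by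
    rw [Finset.disjoint_left]
    intro x hx hx'
    obtain ⟨y, hy, rfl⟩ := Finset.mem_image.mp hx'
    exact (hM z y).mp hy hx
  have hunion : M z ∪ (M z).image σ = univ := by
    ext x
    simp only [Finset.mem_union, Finset.mem_image, Finset.mem_univ, iff_true]
    by_cases hx : x ∈ M z
    · exact Or.inl hx
    · refine Or.inr ⟨σ x, ?_, hσinv x⟩
      by_contra h2
      exact hx ((hM z x).mpr h2)
  have hcardM0 : (M z).card = d := by
    have h1 : (M z ∪ (M z).image σ).card = (M z).card + ((M z).image σ).card :=
      Finset.card_union_of_disjoint hdisj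
    rw [hunion, Finset.card_univ, hX, Finset.card_image_of_injective _ hσinj] at h1
    omega
  -- main computation
  set F : X → ℕ := fun x =>
    (univ.filter (fun q : Fin k × Fin k × Fin k × Fin k =>
      (q.1 < q.2.1 ∧ q.2.1 < q.2.2.1 ∧ q.2.2.1 < q.2.2.2) ∧
      (x ∈ M q.1 ∧ x ∈ M q.2.1 ∧ x ∈ M q.2.2.1 ∧ x ∈ M q.2.2.2))).card with hF
  have main : ∑ q ∈ univ.filter
      (fun q : Fin k × Fin k × Fin k × Fin k =>
        q.1 < q.2.1 ∧ q.2.1 < q.2.2.1 ∧ q.2.2.1 < q.2.2.2),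
      (M q.1 ∩ M q.2.1 ∩ M q.2.2.1 ∩ M q.2.2.2).card = ∑ x : X, F x := by
    rw [Finset.sum_congr rfl (fun q _ => expand q), Finset.sum_comm]
    apply Finset.sum_congr rfl
    intro x _
    rw [hF, Finset.sum_filter]
    simp only [Finset.card_filter]
    apply Finset.sum_congr rfl
    intro q _
    by_cases h1 : q.1 < q.2.1 ∧ q.2.1 < q.2.2.1 ∧ q.2.2.1 < q.2.2.2 <;>
      by_cases h2 : x ∈ M q.1 ∧ x ∈ M q.2.1 ∧ x ∈ M q.2.2.1 ∧ x ∈ M q.2.2.2 <;>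
      simp [h1, h2]
  rw [ge_iff_le, main, ← hunion, Finset.sum_union hdisj,
    Finset.sum_image (fun a _ b _ h => hσinj h), ← Finset.sum_add_distrib]
  calc (((k+1)/2).choose 4 + ((k-1)/2).choose 4) * d
      = ∑ _x ∈ M z, (((k+1)/2).choose 4 + ((k-1)/2).choose 4) := by
        rw [Finset.sum_const, hcardM0, smul_eq_mul, mul_comm]
    _ ≤ ∑ x ∈ M z, (F x + F (σ x)) := by
        apply Finset.sum_le_sum
        intro x _
        calc ((k+1)/2).choose 4 + ((k-1)/2).choose 4
            ≤ ((univ.filter (fun α => x ∈ M α)).card).choose 4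
              + ((univ.filter (fun α => σ x ∈ M α)).card).choose 4 :=
              choose4_pair k _ _ hodd (hnk x)
          _ ≤ F x + F (σ x) := Nat.add_le_add (key x) (key (σ x))
end

section
/- Suppose k is odd and for all 1 ≤ α < β < γ < δ ≤ k the tetrahedral intersection numbers satisfy |M_α ∩ M_β ∩ M_γ ∩ M_δ| ≤ d − 7 (as an inequality of integers). Then C(k,4)·(d−7) ≥ (C((k+1)/2, 4) + C((k−1)/2, 4))·d, where C(m,4) denotes the binomial coefficient m choose 4. -/
open Finset

lemma convex_step (m j : ℕ) :
    Nat.choose (m + 1) 4 + Nat.choose m 4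
      ≤ Nat.choose (m + 1 + j) 4 + Nat.choose (m - j) 4 := by
  induction j with
  | zero => simp
  | succ j ih =>
    have h1 : Nat.choose (m + 1 + (j + 1)) 4
        = Nat.choose (m + 1 + j) 3 + Nat.choose (m + 1 + j) 4 := by
      rw [show m + 1 + (j + 1) = (m + 1 + j) + 1 from rfl, Nat.choose_succ_succ']
    have h2 : Nat.choose (m - j) 4
        ≤ Nat.choose (m - (j + 1)) 4 + Nat.choose (m + 1 + j) 3 := by
      rcases le_or_gt m j with h | h
      · simp [Nat.sub_eq_zero_of_le h]
      · have : m - j = (m - (j + 1)) + 1 := by omega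
        rw [this, Nat.choose_succ_succ']
        have := Nat.choose_le_choose 3 (show m - (j+1) ≤ m + 1 + j by omega)
        simp only [show (3:ℕ) + 1 = 4 from rfl]
        omega
    omega

lemma convex_main (m n : ℕ) (hn : n ≤ 2 * m + 1) :
    Nat.choose (m + 1) 4 + Nat.choose m 4
      ≤ Nat.choose n 4 + Nat.choose (2 * m + 1 - n) 4 := by
  rcases le_or_gt n m with h | h
  · have h1 := convex_step m (m - n)
    have e1 : m - (m - n) = n := by omega
    have e2 : 2 * m + 1 - n = m + 1 + (m - n) := by omega
    rw [e1] at h1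
    rw [e2]
    omega
  · have h1 := convex_step m (n - (m + 1))
    have e1 : m + 1 + (n - (m + 1)) = n := by omega
    have e2 : 2 * m + 1 - n = m - (n - (m + 1)) := by omega
    rw [e1] at h1
    rw [e2]
    omega

/-- If `k` is odd and all tetrahedral intersection numbers satisfy
`|M α ∩ M β ∩ M γ ∩ M δ| ≤ d - 7` (as integers), then
`C(k,4) * (d - 7) ≥ (C((k+1)/2, 4) + C((k-1)/2, 4)) * d`. -/
theorem tetrahedral_constraint_odd {X : Type*} [Fintype X] [DecidableEq X]
    (d k : ℕ) (hd : 0 < d) (hk : 0 < k) (hodd : Odd k)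
    (hX : Fintype.card X = 2 * d)
    (σ : X → X) (hσinv : ∀ x, σ (σ x) = x) (hσfpf : ∀ x, σ x ≠ x)
    (M : Fin k → Finset X)
    (hM : ∀ α, ∀ x : X, x ∈ M α ↔ σ x ∉ M α)
    (ht : ∀ α β γ δ : Fin k, α < β → β < γ → γ < δ →
      ((M α ∩ M β ∩ M γ ∩ M δ).card : ℤ) ≤ (d : ℤ) - 7) :
    (Nat.choose k 4 : ℤ) * ((d : ℤ) - 7)
      ≥ ((Nat.choose ((k + 1) / 2) 4 + Nat.choose ((k - 1) / 2) 4 : ℕ) : ℤ) * (d : ℤ) := by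
  obtain ⟨m, hm⟩ := hodd
  set deg : X → ℕ := fun x => (univ.filter (fun α => x ∈ M α)).card with hdeg
  have hdegle : ∀ x, deg x ≤ k := by
    intro x
    calc deg x ≤ (univ : Finset (Fin k)).card := card_filter_le _ _
    _ = k := by simp
  have hdegσ : ∀ x, deg (σ x) = k - deg x := by
    intro x
    have heq : (univ.filter (fun α => σ x ∈ M α))
        = univ \ (univ.filter (fun α => x ∈ M α)) := by
      ext α
      have h1 := hM α (σ x)
      rw [hσinv x] at h1
      simp [h1]
    simp only [hdeg, heq, card_sdiff_of_subset (filter_subset _ _)]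
    simp
  -- the degree sum
  set S : ℕ := ∑ x : X, (deg x).choose 4 with hS
  set c : ℕ := Nat.choose (m + 1) 4 + Nat.choose m 4 with hc
  have hσbij : Function.Bijective σ :=
    Function.Involutive.bijective hσinv
  have hlower : d * c ≤ S := by
    have hsum : ∑ x : X, (deg (σ x)).choose 4 = S := by
      rw [hS]
      exact Function.Bijective.sum_comp hσbij (fun x => (deg x).choose 4)
    have h2 : 2 * d * c ≤ 2 * S := by
      calc 2 * d * c = ∑ _x : X, c := by
            rw [Finset.sum_const, card_univ, hX]; ring
      _ ≤ ∑ x : X, ((deg x).choose 4 + (deg (σ x)).choose 4) := by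
            apply sum_le_sum
            intro x _
            rw [hdegσ x, hc, hm]
            exact convex_main m (deg x) (by rw [← hm]; exact hdegle x)
      _ = 2 * S := by rw [Finset.sum_add_distrib, hsum, hS]; ring
    rw [mul_assoc] at h2
    exact Nat.le_of_mul_le_mul_left h2 (by norm_num)
  -- double counting
  have hdc : ∑ s ∈ powersetCard 4 (univ : Finset (Fin k)),
      (univ.filter (fun x => ∀ α ∈ s, x ∈ M α)).card = S := by
    calc ∑ s ∈ powersetCard 4 (univ : Finset (Fin k)),
        (univ.filter (fun x => ∀ α ∈ s, x ∈ M α)).card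
        = ∑ s ∈ powersetCard 4 (univ : Finset (Fin k)), ∑ x : X,
            (if ∀ α ∈ s, x ∈ M α then 1 else 0) := by
          refine Finset.sum_congr rfl fun s _ => ?_
          rw [Finset.card_filter]
      _ = ∑ x : X, ∑ s ∈ powersetCard 4 (univ : Finset (Fin k)),
            (if ∀ α ∈ s, x ∈ M α then 1 else 0) := Finset.sum_comm
      _ = ∑ x : X, ((powersetCard 4 (univ : Finset (Fin k))).filter
            (fun s => ∀ α ∈ s, x ∈ M α)).card := by
          refine Finset.sum_congr rfl fun x _ => ?_
          rw [Finset.card_filter]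
      _ = S := by
          apply Finset.sum_congr rfl
          intro x _
          have : (powersetCard 4 (univ : Finset (Fin k))).filter
              (fun s => ∀ α ∈ s, x ∈ M α)
              = powersetCard 4 (univ.filter (fun α => x ∈ M α)) := by
            ext s
            simp only [mem_filter, mem_powersetCard, subset_iff, mem_univ, true_and]
            tauto
          rw [this, card_powersetCard]
  -- upper bound per 4-subset
  have hub : ∀ s ∈ powersetCard 4 (univ : Finset (Fin k)),
      (((univ.filter (fun x => ∀ α ∈ s, x ∈ M α)).card : ℤ)) ≤ (d : ℤ) - 7 := by
    intro s hs
    rw [mem_powersetCard] at hs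
    have hcard := hs.2
    set f := s.orderIsoOfFin hcard with hf
    have hset : univ.filter (fun x => ∀ α ∈ s, x ∈ M α)
        = M ↑(f 0) ∩ M ↑(f 1) ∩ M ↑(f 2) ∩ M ↑(f 3) := by
      ext x
      simp only [mem_filter, mem_univ, true_and, mem_inter]
      constructor
      · intro h
        exact ⟨⟨⟨h _ (f 0).2, h _ (f 1).2⟩, h _ (f 2).2⟩, h _ (f 3).2⟩
      · rintro ⟨⟨⟨h0, h1⟩, h2⟩, h3⟩ α hα
        obtain ⟨i, hi⟩ := f.surjective ⟨α, hα⟩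
        have hiα : (↑(f i) : Fin k) = α := by rw [hi]
        fin_cases i <;> rw [← hiα] <;> assumption
    have hlt : ∀ i j : Fin 4, i < j → (↑(f i) : Fin k) < ↑(f j) := by
      intro i j h
      exact Subtype.coe_lt_coe.mpr (f.strictMono h)
    rw [hset]
    exact ht _ _ _ _ (hlt 0 1 (by decide)) (hlt 1 2 (by decide)) (hlt 2 3 (by decide))
  have hupper : (S : ℤ) ≤ (Nat.choose k 4 : ℤ) * ((d : ℤ) - 7) := by
    rw [← hdc]
    push_cast
    calc ∑ s ∈ powersetCard 4 (univ : Finset (Fin k)),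
        ((univ.filter (fun x => ∀ α ∈ s, x ∈ M α)).card : ℤ)
        ≤ ∑ _s ∈ powersetCard 4 (univ : Finset (Fin k)), ((d : ℤ) - 7) :=
          sum_le_sum hub
      _ = (Nat.choose k 4 : ℤ) * ((d : ℤ) - 7) := by
          rw [Finset.sum_const, card_powersetCard, card_univ, Fintype.card_fin,
            nsmul_eq_mul]
  have e1 : (k + 1) / 2 = m + 1 := by omega
  have e2 : (k - 1) / 2 = m := by omega
  rw [e1, e2]
  have hl' : ((d * c : ℕ) : ℤ) ≤ (S : ℤ) := by exact_mod_cast hlower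
  rw [hc] at hl'
  push_cast at hl' ⊢
  linarith
end

section
/- If k is even, then the sum of all tetrahedral intersection numbers is bounded below in terms of the dimension: Σ_{1 ≤ α < β < γ < δ ≤ k} |M_α ∩ M_β ∩ M_γ ∩ M_δ| ≥ 2·C(k/2, 4)·d, where C(m,4) denotes the binomial coefficient m choose 4. -/
open Finset

lemma conv_step (m j : ℕ) : 2 * Nat.choose m 4 ≤ Nat.choose (m - j) 4 + Nat.choose (m + j) 4 := by
  induction j with
  | zero => simp [two_mul]
  | succ j ih =>
    refine ih.trans ?_
    have h1 : Nat.choose (m + (j+1)) 4 = Nat.choose (m+j) 3 + Nat.choose (m+j) 4 := by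
      rw [show m + (j+1) = (m+j) + 1 from rfl]
      rw [Nat.choose_succ_succ]
    rcases Nat.eq_zero_or_pos (m - j) with h0 | hpos
    · have h0' : m - (j+1) = 0 := by omega
      simp [h0, h0', h1]
    · obtain ⟨s, hs⟩ : ∃ s, m - j = s + 1 := ⟨m - j - 1, by omega⟩
      have hms : m - (j+1) = s := by omega
      have hsle : s ≤ m + j := by omega
      have h2 : Nat.choose (s+1) 4 = Nat.choose s 3 + Nat.choose s 4 := Nat.choose_succ_succ s 3
      have h3 : Nat.choose s 3 ≤ Nat.choose (m+j) 3 := Nat.choose_le_choose 3 hsle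
      rw [hs, hms, h1, h2]
      omega

lemma conv2 {a b m : ℕ} (h : a + b = 2 * m) :
    2 * Nat.choose m 4 ≤ Nat.choose a 4 + Nat.choose b 4 := by
  rcases le_total a b with hab | hab
  · have ha : a = m - (m - a) := by omega
    have hb : b = m + (m - a) := by omega
    have := conv_step m (m - a)
    rw [← ha, ← hb] at this
    exact this
  · have hb : b = m - (m - b) := by omega
    have ha : a = m + (m - b) := by omega
    have := conv_step m (m - b)
    rw [← hb, ← ha] at this
    omega

lemma card_four_of_sorted {k : ℕ} {a b c d : Fin k} (h1 : a < b) (h2 : b < c) (h3 : c < d) :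
    ({a, b, c, d} : Finset (Fin k)).card = 4 := by
  have h1' := Fin.lt_def.mp h1
  have h2' := Fin.lt_def.mp h2
  have h3' := Fin.lt_def.mp h3
  rw [card_insert_of_notMem (by simp [Fin.ext_iff]; omega),
      card_insert_of_notMem (by simp [Fin.ext_iff]; omega),
      card_insert_of_notMem (by simp [Fin.ext_iff]; omega),
      card_singleton]

lemma quad_count {k : ℕ} (s : Finset (Fin k)) :
    (univ.filter (fun q : Fin k × Fin k × Fin k × Fin k =>
      (q.1 < q.2.1 ∧ q.2.1 < q.2.2.1 ∧ q.2.2.1 < q.2.2.2) ∧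
      q.1 ∈ s ∧ q.2.1 ∈ s ∧ q.2.2.1 ∈ s ∧ q.2.2.2 ∈ s)).card = s.card.choose 4 := by
  rw [← Finset.card_powersetCard]
  apply Finset.card_bij (fun q _ => ({q.1, q.2.1, q.2.2.1, q.2.2.2} : Finset (Fin k)))
  · intro q hq
    simp only [mem_filter, mem_univ, true_and] at hq
    obtain ⟨⟨h1, h2, h3⟩, m1, m2, m3, m4⟩ := hq
    rw [Finset.mem_powersetCard]
    refine ⟨?_, card_four_of_sorted h1 h2 h3⟩
    intro y hy
    simp only [mem_insert, mem_singleton] at hy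
    rcases hy with h|h|h|h <;> subst h <;> assumption
  · intro q hq q' hq' heq
    simp only [mem_filter, mem_univ, true_and] at hq hq'
    obtain ⟨⟨h1, h2, h3⟩, -⟩ := hq
    obtain ⟨⟨h1', h2', h3'⟩, -⟩ := hq'
    have h1n := Fin.lt_def.mp h1; have h2n := Fin.lt_def.mp h2; have h3n := Fin.lt_def.mp h3
    have h1n' := Fin.lt_def.mp h1'; have h2n' := Fin.lt_def.mp h2'; have h3n' := Fin.lt_def.mp h3'
    have e1 : q.1 ∈ ({q'.1, q'.2.1, q'.2.2.1, q'.2.2.2} : Finset (Fin k)) := by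
      rw [← heq]; simp
    have e2 : q.2.1 ∈ ({q'.1, q'.2.1, q'.2.2.1, q'.2.2.2} : Finset (Fin k)) := by
      rw [← heq]; simp
    have e3 : q.2.2.1 ∈ ({q'.1, q'.2.1, q'.2.2.1, q'.2.2.2} : Finset (Fin k)) := by
      rw [← heq]; simp
    have e4 : q.2.2.2 ∈ ({q'.1, q'.2.1, q'.2.2.1, q'.2.2.2} : Finset (Fin k)) := by
      rw [← heq]; simp
    simp only [mem_insert, mem_singleton, Fin.ext_iff] at e1 e2 e3 e4
    have : (q.1 : ℕ) = q'.1 ∧ (q.2.1 : ℕ) = q'.2.1 ∧ (q.2.2.1 : ℕ) = q'.2.2.1 ∧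
        (q.2.2.2 : ℕ) = q'.2.2.2 := by omega
    obtain ⟨g1, g2, g3, g4⟩ := this
    ext <;> simp [Fin.ext_iff, g1, g2, g3, g4]
  · intro t ht
    rw [Finset.mem_powersetCard] at ht
    obtain ⟨hsub, hcard⟩ := ht
    set e := t.orderEmbOfFin hcard with he
    have hmem : ∀ i : Fin 4, e i ∈ t := fun i => t.orderEmbOfFin_mem hcard i
    have hmono : StrictMono e := (t.orderEmbOfFin hcard).strictMono
    refine ⟨(e 0, e 1, e 2, e 3), ?_, ?_⟩
    · simp only [mem_filter, mem_univ, true_and]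
      exact ⟨⟨hmono (by decide), hmono (by decide), hmono (by decide)⟩,
        hsub (hmem 0), hsub (hmem 1), hsub (hmem 2), hsub (hmem 3)⟩
    · apply Finset.eq_of_subset_of_card_le
      · intro y hy
        simp only [mem_insert, mem_singleton] at hy
        rcases hy with h|h|h|h <;> subst h <;> exact hmem _
      · rw [hcard, card_four_of_sorted (hmono (by decide)) (hmono (by decide)) (hmono (by decide))]

/-- If `k` is even, the sum of all tetrahedral intersection numbers is
bounded below: `Σ_{α<β<γ<δ} |M α ∩ M β ∩ M γ ∩ M δ| ≥ 2 * C(k/2, 4) * d`. -/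
theorem tetrahedral_sum_lower_bound_even {X : Type*} [Fintype X] [DecidableEq X]
    (d k : ℕ) (hd : 0 < d) (hk : 0 < k) (heven : Even k)
    (hX : Fintype.card X = 2 * d)
    (σ : X → X) (hσinv : ∀ x, σ (σ x) = x) (hσfpf : ∀ x, σ x ≠ x)
    (M : Fin k → Finset X)
    (hM : ∀ α, ∀ x : X, x ∈ M α ↔ σ x ∉ M α) :
    ∑ q ∈ univ.filter
        (fun q : Fin k × Fin k × Fin k × Fin k =>
          q.1 < q.2.1 ∧ q.2.1 < q.2.2.1 ∧ q.2.2.1 < q.2.2.2),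
        (M q.1 ∩ M q.2.1 ∩ M q.2.2.1 ∩ M q.2.2.2).card
      ≥ 2 * Nat.choose (k / 2) 4 * d := by
  classical
  set Q : Finset (Fin k × Fin k × Fin k × Fin k) := univ.filter
      (fun q : Fin k × Fin k × Fin k × Fin k =>
        q.1 < q.2.1 ∧ q.2.1 < q.2.2.1 ∧ q.2.2.1 < q.2.2.2) with hQ
  set A : X → Finset (Fin k) := fun x => univ.filter (fun α => x ∈ M α) with hA
  -- n x + n (σ x) = k
  have hcompl : ∀ x : X, (A x).card + (A (σ x)).card = k := by
    intro x
    have hAs : A (σ x) = univ.filter (fun α => x ∉ M α) := by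
      apply Finset.filter_congr
      intro α _
      have := hM α (σ x)
      rw [hσinv x] at this
      simp [this]
    rw [hAs]
    have := Finset.card_filter_add_card_filter_not (s := (univ : Finset (Fin k)))
      (p := fun α => x ∈ M α)
    simpa using this
  -- rewrite LHS
  have key : ∑ q ∈ Q, (M q.1 ∩ M q.2.1 ∩ M q.2.2.1 ∩ M q.2.2.2).card
      = ∑ x : X, ((A x).card.choose 4) := by
    calc ∑ q ∈ Q, (M q.1 ∩ M q.2.1 ∩ M q.2.2.1 ∩ M q.2.2.2).card
        = ∑ q ∈ Q, ∑ x : X,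
            (if x ∈ M q.1 ∧ x ∈ M q.2.1 ∧ x ∈ M q.2.2.1 ∧ x ∈ M q.2.2.2 then 1 else 0) := by
          refine Finset.sum_congr rfl fun q _ => ?_
          rw [← Finset.card_filter]
          congr 1
          ext y
          simp [and_assoc]
      _ = ∑ x : X, ∑ q ∈ Q,
            (if x ∈ M q.1 ∧ x ∈ M q.2.1 ∧ x ∈ M q.2.2.1 ∧ x ∈ M q.2.2.2 then 1 else 0) :=
          Finset.sum_comm
      _ = ∑ x : X, ((A x).card.choose 4) := by
          refine Finset.sum_congr rfl fun x _ => ?_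
          rw [← Finset.card_filter, hQ, Finset.filter_filter]
          rw [← quad_count (A x)]
          congr 1
          apply Finset.filter_congr
          intro q _
          simp [hA]
  rw [key]
  -- pairing argument
  have he : Function.Involutive σ := hσinv
  let eσ : Equiv.Perm X := he.toPerm σ
  have hsum2 : 2 * ∑ x : X, ((A x).card.choose 4)
      = ∑ x : X, (((A x).card.choose 4) + ((A (σ x)).card.choose 4)) := by
    rw [Finset.sum_add_distrib, two_mul]
    congr 1
    exact (Equiv.sum_comp eσ (fun x => (A x).card.choose 4)).symm
  have hbound : ∀ x : X, 2 * Nat.choose (k / 2) 4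
      ≤ ((A x).card.choose 4) + ((A (σ x)).card.choose 4) := by
    intro x
    apply conv2
    rw [hcompl x]
    obtain ⟨m, hm⟩ := heven
    omega
  have : 2 * (2 * Nat.choose (k / 2) 4 * d) ≤ 2 * ∑ x : X, ((A x).card.choose 4) := by
    rw [hsum2]
    calc 2 * (2 * Nat.choose (k / 2) 4 * d)
        = Fintype.card X * (2 * Nat.choose (k / 2) 4) := by rw [hX]; ring
      _ = ∑ _x : X, 2 * Nat.choose (k / 2) 4 := by
          rw [Finset.sum_const, card_univ, smul_eq_mul]
      _ ≤ _ := Finset.sum_le_sum fun x _ => hbound x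
  exact le_of_mul_le_mul_left this two_pos
end

section
/- Suppose k is even and for all 1 ≤ α < β < γ < δ ≤ k the tetrahedral intersection numbers satisfy |M_α ∩ M_β ∩ M_γ ∩ M_δ| ≤ d − 7 (as an inequality of integers). Then C(k,4)·(d−7) ≥ 2·C(k/2, 4)·d, where C(m,4) denotes the binomial coefficient m choose 4. -/
open Finset

lemma choose4_convex_s11 (m t : ℕ) :
    2 * Nat.choose m 4 ≤ Nat.choose (m - t) 4 + Nat.choose (m + t) 4 := by
  induction t with
  | zero => simp [two_mul]
  | succ t ih =>
    have e1 : Nat.choose (m + t + 1) 4 = Nat.choose (m + t) 3 + Nat.choose (m + t) 4 :=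
      Nat.choose_succ_succ (m + t) 3
    rw [show m + (t + 1) = m + t + 1 by omega]
    rcases le_or_gt (t + 1) m with h | h
    · have h1 : m - t = (m - (t + 1)) + 1 := by omega
      have e2 : Nat.choose (m - t) 4
          = Nat.choose (m - (t + 1)) 3 + Nat.choose (m - (t + 1)) 4 := by
        rw [h1]; exact Nat.choose_succ_succ _ 3
      have mono : Nat.choose (m - (t + 1)) 3 ≤ Nat.choose (m + t) 3 :=
        Nat.choose_le_choose 3 (by omega)
      omega
    · have h0 : m - t = 0 := by omega
      have h0' : m - (t + 1) = 0 := by omega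
      rw [h0] at ih
      rw [h0']
      have : Nat.choose 0 4 = 0 := rfl
      omega

lemma choose4_convex' (m a b : ℕ) (hab : a + b = 2 * m) :
    2 * Nat.choose m 4 ≤ Nat.choose a 4 + Nat.choose b 4 := by
  rcases le_total a m with h | h
  · have ha : a = m - (m - a) := by omega
    have hb : b = m + (m - a) := by omega
    rw [ha, hb]; exact choose4_convex_s11 m (m - a)
  · have hb : b = m - (a - m) := by omega
    have ha : a = m + (a - m) := by omega
    rw [ha, hb, Nat.add_comm]; exact choose4_convex_s11 m (a - m)

/-- If `k` is even and all tetrahedral intersection numbers satisfy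
`|M α ∩ M β ∩ M γ ∩ M δ| ≤ d - 7` (as integers), then
`C(k,4) * (d - 7) ≥ 2 * C(k/2, 4) * d`. -/
theorem tetrahedral_constraint_even {X : Type*} [Fintype X] [DecidableEq X]
    (d k : ℕ) (hd : 0 < d) (hk : 0 < k) (heven : Even k)
    (hX : Fintype.card X = 2 * d)
    (σ : X → X) (hσinv : ∀ x, σ (σ x) = x) (hσfpf : ∀ x, σ x ≠ x)
    (M : Fin k → Finset X)
    (hM : ∀ α, ∀ x : X, x ∈ M α ↔ σ x ∉ M α)
    (ht : ∀ α β γ δ : Fin k, α < β → β < γ → γ < δ →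
      ((M α ∩ M β ∩ M γ ∩ M δ).card : ℤ) ≤ (d : ℤ) - 7) :
    (Nat.choose k 4 : ℤ) * ((d : ℤ) - 7)
      ≥ 2 * (Nat.choose (k / 2) 4 : ℤ) * (d : ℤ) := by
  classical
  obtain ⟨m, hm⟩ := heven
  have hm' : k = 2 * m := by omega
  have hdiv : k / 2 = m := by omega
  set deg : X → ℕ := fun x => (univ.filter (fun α => x ∈ M α)).card with hdeg
  -- complement degrees
  have hdegσ : ∀ x, deg x + deg (σ x) = k := by
    intro x
    have h1 : (univ.filter (fun α => σ x ∈ M α))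
        = (univ.filter (fun α => ¬ x ∈ M α)) := by
      apply filter_congr
      intro α _
      constructor
      · intro hs hx; exact ((hM α x).mp hx) hs
      · intro hx
        by_contra hns
        have := (hM α (σ x)).mpr (by rw [hσinv]; exact hx)
        exact hns this
    simp only [hdeg]
    rw [h1, card_filter_add_card_filter_not]
    simp
  -- double counting
  have key : ∑ T ∈ powersetCard 4 (univ : Finset (Fin k)),
      (univ.filter (fun x : X => ∀ α ∈ T, x ∈ M α)).card
      = ∑ x : X, (deg x).choose 4 := by
    have step : ∀ T : Finset (Fin k),
        (univ.filter (fun x : X => ∀ α ∈ T, x ∈ M α)).card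
        = ∑ x : X, if ∀ α ∈ T, x ∈ M α then 1 else 0 := by
      intro T; rw [card_filter]
    rw [Finset.sum_congr rfl (fun T _ => step T), Finset.sum_comm]
    apply Finset.sum_congr rfl
    intro x _
    have hset : (powersetCard 4 (univ : Finset (Fin k))).filter
        (fun T => ∀ α ∈ T, x ∈ M α)
        = powersetCard 4 (univ.filter (fun α => x ∈ M α)) := by
      ext T
      simp only [mem_filter, mem_powersetCard, Finset.subset_iff, mem_filter, mem_univ,
        true_and]
      tauto
    calc ∑ T ∈ powersetCard 4 (univ : Finset (Fin k)),
          (if ∀ α ∈ T, x ∈ M α then 1 else 0)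
        = ((powersetCard 4 (univ : Finset (Fin k))).filter
            (fun T => ∀ α ∈ T, x ∈ M α)).card := (card_filter _ _).symm
      _ = (powersetCard 4 (univ.filter (fun α => x ∈ M α))).card := by rw [hset]
      _ = (deg x).choose 4 := by rw [card_powersetCard]
  -- upper bound on each tetrahedron
  have hub : ∀ T ∈ powersetCard 4 (univ : Finset (Fin k)),
      ((univ.filter (fun x : X => ∀ α ∈ T, x ∈ M α)).card : ℤ) ≤ (d : ℤ) - 7 := by
    intro T hT
    have hTc : T.card = 4 := (mem_powersetCard.mp hT).2
    let f := T.orderIsoOfFin hTc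
    have hord : f 0 < f 1 ∧ f 1 < f 2 ∧ f 2 < f 3 := by
      refine ⟨?_, ?_, ?_⟩ <;> · rw [OrderIso.lt_iff_lt]; decide
    have hsub : (univ.filter (fun x : X => ∀ α ∈ T, x ∈ M α))
        ⊆ M (f 0) ∩ M (f 1) ∩ M (f 2) ∩ M (f 3) := by
      intro x hx
      rw [mem_filter] at hx
      simp only [mem_inter]
      exact ⟨⟨⟨hx.2 _ (f 0).2, hx.2 _ (f 1).2⟩, hx.2 _ (f 2).2⟩, hx.2 _ (f 3).2⟩
    calc ((univ.filter (fun x : X => ∀ α ∈ T, x ∈ M α)).card : ℤ)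
        ≤ ((M (f 0) ∩ M (f 1) ∩ M (f 2) ∩ M (f 3)).card : ℤ) := by
          exact_mod_cast card_le_card hsub
      _ ≤ (d : ℤ) - 7 := ht _ _ _ _ hord.1 hord.2.1 hord.2.2
  -- lower bound on the degree sum
  have hσbij : Function.Bijective σ := Function.Involutive.bijective hσinv
  have reindex : ∑ x : X, (deg (σ x)).choose 4 = ∑ x : X, (deg x).choose 4 :=
    Fintype.sum_bijective σ hσbij _ _ (fun x => rfl)
  have hlow : 2 * Nat.choose m 4 * d ≤ ∑ x : X, (deg x).choose 4 := by
    have h2 : 2 * ∑ x : X, (deg x).choose 4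
        = ∑ x : X, ((deg x).choose 4 + (deg (σ x)).choose 4) := by
      rw [Finset.sum_add_distrib, reindex]; ring
    have hper : ∀ x : X, 2 * Nat.choose m 4
        ≤ (deg x).choose 4 + (deg (σ x)).choose 4 := by
      intro x
      exact choose4_convex' m _ _ (by rw [hdegσ x, hm'])
    have hsum : (Fintype.card X) * (2 * Nat.choose m 4)
        ≤ ∑ x : X, ((deg x).choose 4 + (deg (σ x)).choose 4) := by
      calc (Fintype.card X) * (2 * Nat.choose m 4)
          = ∑ _x : X, 2 * Nat.choose m 4 := by rw [Finset.sum_const, card_univ]; ring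
        _ ≤ _ := Finset.sum_le_sum (fun x _ => hper x)
    rw [hX, ← h2] at hsum
    have : 2 * (2 * Nat.choose m 4 * d) ≤ 2 * ∑ x : X, (deg x).choose 4 := by
      calc 2 * (2 * Nat.choose m 4 * d) = 2 * d * (2 * Nat.choose m 4) := by ring
        _ ≤ _ := hsum
    exact Nat.le_of_mul_le_mul_left this (by norm_num)
  -- combine
  have hub' : ((∑ x : X, (deg x).choose 4 : ℕ) : ℤ)
      ≤ (Nat.choose k 4 : ℤ) * ((d : ℤ) - 7) := by
    rw [← key]
    push_cast
    calc (∑ T ∈ powersetCard 4 (univ : Finset (Fin k)),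
          ((univ.filter (fun x : X => ∀ α ∈ T, x ∈ M α)).card : ℤ))
        ≤ ∑ T ∈ powersetCard 4 (univ : Finset (Fin k)), ((d : ℤ) - 7) :=
          Finset.sum_le_sum hub
      _ = ((powersetCard 4 (univ : Finset (Fin k))).card : ℤ) * ((d : ℤ) - 7) := by
          rw [Finset.sum_const]; push_cast [nsmul_eq_mul]; ring
      _ = (Nat.choose k 4 : ℤ) * ((d : ℤ) - 7) := by
          rw [card_powersetCard, card_univ, Fintype.card_fin]
  have hlow' : (2 * Nat.choose m 4 * d : ℤ) ≤ ((∑ x : X, (deg x).choose 4 : ℕ) : ℤ) := by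
    exact_mod_cast hlow
  rw [hdiv]
  calc 2 * (Nat.choose m 4 : ℤ) * (d : ℤ)
      = (2 * Nat.choose m 4 * d : ℤ) := by push_cast; ring
    _ ≤ _ := le_trans hlow' hub'
end

section
/- For three admissible subsets the pairwise intersection sizes satisfy the identity |M_1 ∩ M_2| + |M_1 ∩ M_3| + |M_2 ∩ M_3| = d + 2·|M_1 ∩ M_2 ∩ M_3|. -/
open Finset

/-- For three admissible subsets of a `2d`-element set with a
fixed-point-free involution,
`|M₁ ∩ M₂| + |M₁ ∩ M₃| + |M₂ ∩ M₃| = d + 2 * |M₁ ∩ M₂ ∩ M₃|`. -/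
theorem three_set_intersection_identity {X : Type*} [Fintype X] [DecidableEq X]
    (d : ℕ) (hd : 0 < d)
    (hX : Fintype.card X = 2 * d)
    (σ : X → X) (hσinv : ∀ x, σ (σ x) = x) (hσfpf : ∀ x, σ x ≠ x)
    (M₁ M₂ M₃ : Finset X)
    (hM₁ : ∀ x : X, x ∈ M₁ ↔ σ x ∉ M₁)
    (hM₂ : ∀ x : X, x ∈ M₂ ↔ σ x ∉ M₂)
    (hM₃ : ∀ x : X, x ∈ M₃ ↔ σ x ∉ M₃) :
    (M₁ ∩ M₂).card + (M₁ ∩ M₃).card + (M₂ ∩ M₃).card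
      = d + 2 * (M₁ ∩ M₂ ∩ M₃).card := by
  set g : X → ℤ := fun x =>
    (if x ∈ M₁ ∩ M₂ then 1 else 0) + (if x ∈ M₁ ∩ M₃ then 1 else 0)
      + (if x ∈ M₂ ∩ M₃ then 1 else 0)
      - 2 * (if x ∈ M₁ ∩ M₂ ∩ M₃ then 1 else 0) with hg
  have hsum : ∑ x, g x
      = ((M₁ ∩ M₂).card : ℤ) + (M₁ ∩ M₃).card + (M₂ ∩ M₃).card
        - 2 * (M₁ ∩ M₂ ∩ M₃).card := by
    simp only [hg]
    rw [Finset.sum_sub_distrib, Finset.sum_add_distrib, Finset.sum_add_distrib,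
      ← Finset.mul_sum]
    simp [Finset.sum_ite_mem, Finset.filter_and, Finset.filter_mem_eq_inter,
      Finset.univ_inter, Finset.inter_assoc]
  have hpair : ∀ x, g x + g (σ x) = 1 := by
    intro x
    have e1 : σ x ∈ M₁ ↔ x ∉ M₁ := by
      constructor
      · intro h hx; exact (hM₁ x).mp hx h
      · intro h; by_contra h'; exact h ((hM₁ x).mpr h')
    have e2 : σ x ∈ M₂ ↔ x ∉ M₂ := by
      constructor
      · intro h hx; exact (hM₂ x).mp hx h
      · intro h; by_contra h'; exact h ((hM₂ x).mpr h')
    have e3 : σ x ∈ M₃ ↔ x ∉ M₃ := by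
      constructor
      · intro h hx; exact (hM₃ x).mp hx h
      · intro h; by_contra h'; exact h ((hM₃ x).mpr h')
    by_cases h1 : x ∈ M₁ <;> by_cases h2 : x ∈ M₂ <;> by_cases h3 : x ∈ M₃ <;>
      simp [hg, Finset.mem_inter, h1, h2, h3, e1, e2, e3]
  have hσ : Function.Involutive σ := hσinv
  have hcomp : ∑ x, g (σ x) = ∑ x, g x := by
    exact Fintype.sum_equiv hσ.toPerm _ _ (fun x => rfl)
  have h2 : 2 * ∑ x, g x = 2 * d := by
    have : (∑ x, g x) + (∑ x, g (σ x)) = ∑ x : X, (1 : ℤ) := by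
      rw [← Finset.sum_add_distrib]
      exact Finset.sum_congr rfl fun x _ => hpair x
    simp only [Finset.sum_const, Finset.card_univ, hX, smul_eq_mul, nsmul_eq_mul, mul_one] at this
    rw [hcomp] at this
    push_cast at this ⊢
    linarith
  rw [hsum] at h2
  have : ((M₁ ∩ M₂).card : ℤ) + (M₁ ∩ M₃).card + (M₂ ∩ M₃).card
      = d + 2 * (M₁ ∩ M₂ ∩ M₃).card := by linarith
  exact_mod_cast this
end

section
/- For four admissible subsets the pairwise intersection sizes satisfy the identity Σ_{1 ≤ α < β ≤ 4} |M_α ∩ M_β| = 2d + n_3 + 4·|M_1 ∩ M_2 ∩ M_3 ∩ M_4|, where n_3 is the number of elements of X belonging to exactly three of the four sets. -/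
open Finset

private lemma pairs_card_aux : ∀ A : Finset (Fin 4),
    ((univ.filter (fun p : Fin 4 × Fin 4 => p.1 < p.2)).filter
      (fun p => p.1 ∈ A ∧ p.2 ∈ A)).card = A.card.choose 2 := by decide

/-- For four admissible subsets of a `2d`-element set with a
fixed-point-free involution, the sum of the six pairwise intersection sizes equals
`2d + n₃ + 4 * |M₁ ∩ M₂ ∩ M₃ ∩ M₄|`, where `n₃` is the number of elements belonging to
exactly three of the four sets. -/
theorem four_set_intersection_identity {X : Type*} [Fintype X] [DecidableEq X]
    (d : ℕ) (hd : 0 < d)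
    (hX : Fintype.card X = 2 * d)
    (σ : X → X) (hσinv : ∀ x, σ (σ x) = x) (hσfpf : ∀ x, σ x ≠ x)
    (M : Fin 4 → Finset X)
    (hM : ∀ α, ∀ x : X, x ∈ M α ↔ σ x ∉ M α)
    (n₃ : ℕ)
    (hn₃ : n₃ =
      (univ.filter (fun x : X => (univ.filter (fun α : Fin 4 => x ∈ M α)).card = 3)).card) :
    ∑ p ∈ univ.filter (fun p : Fin 4 × Fin 4 => p.1 < p.2), (M p.1 ∩ M p.2).card
      = 2 * d + n₃ + 4 * (M 0 ∩ M 1 ∩ M 2 ∩ M 3).card := by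
  classical
  set k : X → ℕ := fun x => (univ.filter (fun α : Fin 4 => x ∈ M α)).card with hk
  have hkle : ∀ x, k x ≤ 4 := by
    intro x
    have := card_filter_le (univ : Finset (Fin 4)) (fun α => x ∈ M α)
    simpa using this
  have hcompl : ∀ x : X, (univ.filter (fun α : Fin 4 => σ x ∈ M α))
      = (univ.filter (fun α : Fin 4 => x ∈ M α))ᶜ := by
    intro x
    ext α
    have h1 := hM α (σ x)
    rw [hσinv x] at h1
    simp only [mem_compl, mem_filter, mem_univ, true_and]
    exact h1
  have hkσ : ∀ x, k (σ x) = 4 - k x := by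
    intro x
    show (univ.filter (fun α : Fin 4 => σ x ∈ M α)).card = 4 - k x
    rw [hcompl x, card_compl, Fintype.card_fin]
  -- bijection: card of fiber j equals card of fiber 4 - j
  have hbij : ∀ j : ℕ, j ≤ 4 →
      (univ.filter (fun x => k x = j)).card = (univ.filter (fun x => k x = 4 - j)).card := by
    intro j hj
    apply card_bij' (fun x _ => σ x) (fun y _ => σ y)
    · intro x hx
      simp only [mem_filter, mem_univ, true_and] at hx ⊢
      rw [hkσ x, hx]
    · intro y hy
      simp only [mem_filter, mem_univ, true_and] at hy ⊢
      rw [hkσ y, hy]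
      omega
    · intro x _; exact hσinv x
    · intro y _; exact hσinv y
  set n : ℕ → ℕ := fun j => (univ.filter (fun x => k x = j)).card with hn
  -- fiberwise sums
  have hfib : ∀ f : ℕ → ℕ, ∑ x : X, f (k x) = ∑ j ∈ range 5, n j * f j := by
    intro f
    rw [← Finset.sum_fiberwise_of_maps_to (g := k) (t := range 5)
        (fun x _ => mem_range.mpr (by have := hkle x; omega)) (fun x => f (k x))]
    refine sum_congr rfl fun j _ => ?_
    rw [Finset.sum_congr rfl (fun x hx => by rw [(mem_filter.mp hx).2]),
      Finset.sum_const, smul_eq_mul]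
  -- LHS
  have hL : ∑ p ∈ univ.filter (fun p : Fin 4 × Fin 4 => p.1 < p.2), (M p.1 ∩ M p.2).card
      = ∑ x : X, (k x).choose 2 := by
    have h1 : ∀ p : Fin 4 × Fin 4, (M p.1 ∩ M p.2).card
        = ∑ x : X, (if x ∈ M p.1 ∧ x ∈ M p.2 then 1 else 0) := by
      intro p
      rw [← card_filter]
      congr 1
      ext x
      simp [mem_inter]
    calc ∑ p ∈ univ.filter (fun p : Fin 4 × Fin 4 => p.1 < p.2), (M p.1 ∩ M p.2).card
        = ∑ p ∈ univ.filter (fun p : Fin 4 × Fin 4 => p.1 < p.2),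
            ∑ x : X, (if x ∈ M p.1 ∧ x ∈ M p.2 then 1 else 0) :=
          sum_congr rfl fun p _ => h1 p
      _ = ∑ x : X, ∑ p ∈ univ.filter (fun p : Fin 4 × Fin 4 => p.1 < p.2),
            (if x ∈ M p.1 ∧ x ∈ M p.2 then 1 else 0) := Finset.sum_comm
      _ = ∑ x : X, (k x).choose 2 := by
          refine sum_congr rfl fun x _ => ?_
          rw [← card_filter]
          have := pairs_card_aux (univ.filter (fun α : Fin 4 => x ∈ M α))
          simp only [mem_filter, mem_univ, true_and] at this
          exact this
  have hsum1 : (Fintype.card X) = ∑ j ∈ range 5, n j * 1 := by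
    rw [← hfib (fun _ => 1)]
    simp
  have hLsum : ∑ x : X, (k x).choose 2 = ∑ j ∈ range 5, n j * (Nat.choose j 2) := hfib (fun j => j.choose 2)
  -- n 4 equals the card of the 4-fold intersection
  have hn4 : n 4 = (M 0 ∩ M 1 ∩ M 2 ∩ M 3).card := by
    show (univ.filter (fun x => k x = 4)).card = _
    congr 1
    ext x
    simp only [mem_filter, mem_univ, true_and, mem_inter]
    constructor
    · intro h
      have hu : (univ.filter (fun α : Fin 4 => x ∈ M α)) = univ := by
        apply Finset.eq_univ_of_card
        simpa using h
      have hall : ∀ α : Fin 4, x ∈ M α := fun α => by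
        have : α ∈ univ.filter (fun α : Fin 4 => x ∈ M α) := by rw [hu]; exact mem_univ α
        exact (mem_filter.mp this).2
      exact ⟨⟨⟨hall 0, hall 1⟩, hall 2⟩, hall 3⟩
    · rintro ⟨⟨⟨h0, h1⟩, h2⟩, h3⟩
      have hu : (univ.filter (fun α : Fin 4 => x ∈ M α)) = univ := by
        ext α
        simp only [mem_filter, mem_univ, true_and, iff_true]
        fin_cases α <;> assumption
      simp [hk, hu]
    -- note: k x = 4 ↔ filter = univ since card (Fin 4) = 4
  have h04 : n 0 = n 4 := by simpa using hbij 0 (by norm_num)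
  have h13 : n 1 = n 3 := by
    have := hbij 1 (by norm_num)
    simpa using this
  have hn3' : n₃ = n 3 := hn₃
  -- expand range-5 sums
  rw [hL, hLsum]
  rw [hX] at hsum1
  rw [show (5 : ℕ) = 4 + 1 by rfl] at hsum1 ⊢
  rw [Finset.sum_range_succ, Finset.sum_range_succ, Finset.sum_range_succ,
    Finset.sum_range_succ, Finset.sum_range_succ] at hsum1 ⊢
  simp only [Nat.choose] at *
  rw [hn3', ← hn4]
  norm_num at hsum1 ⊢
  omega
end

section
/- Suppose |M_α ∩ M_β| ≤ 2 for all 1 ≤ α < β ≤ 3. Then |M_α ∩ M_β| = 2 for every pair, the triple intersection M_1 ∩ M_2 ∩ M_3 is empty, every element of X belongs to exactly one or exactly two of the three sets, and exactly 6 elements belong to exactly two of the sets while exactly 6 belong to exactly one. -/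
open Finset

/-- Auxiliary: number of pairwise intersections containing `x`. -/
def pairCnt {X : Type*} [DecidableEq X] (M₁ M₂ M₃ : Finset X) (x : X) : ℕ :=
  (if x ∈ M₁ ∩ M₂ then 1 else 0) + (if x ∈ M₁ ∩ M₃ then 1 else 0) +
    (if x ∈ M₂ ∩ M₃ then 1 else 0)

/-- In dimension twelve (`|X| = 12`, `d = 6`): if three admissible
subsets have pairwise intersections of size at most 2, then every pairwise intersection
has size exactly 2, the triple intersection is empty, every element belongs to exactly
one or exactly two of the three sets, and exactly 6 elements belong to exactly two of
the sets while exactly 6 belong to exactly one. -/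
theorem twelve_dim_three_spinors {X : Type*} [Fintype X] [DecidableEq X]
    (hX : Fintype.card X = 12)
    (σ : X → X) (hσinv : ∀ x, σ (σ x) = x) (hσfpf : ∀ x, σ x ≠ x)
    (M₁ M₂ M₃ : Finset X)
    (hM₁ : ∀ x : X, x ∈ M₁ ↔ σ x ∉ M₁)
    (hM₂ : ∀ x : X, x ∈ M₂ ↔ σ x ∉ M₂)
    (hM₃ : ∀ x : X, x ∈ M₃ ↔ σ x ∉ M₃)
    (h₁₂ : (M₁ ∩ M₂).card ≤ 2) (h₁₃ : (M₁ ∩ M₃).card ≤ 2) (h₂₃ : (M₂ ∩ M₃).card ≤ 2)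
    (cnt : X → ℕ)
    (hcnt : ∀ x, cnt x =
      (if x ∈ M₁ then 1 else 0) + (if x ∈ M₂ then 1 else 0) + (if x ∈ M₃ then 1 else 0)) :
    (M₁ ∩ M₂).card = 2 ∧ (M₁ ∩ M₃).card = 2 ∧ (M₂ ∩ M₃).card = 2 ∧
    M₁ ∩ M₂ ∩ M₃ = ∅ ∧
    (∀ x : X, cnt x = 1 ∨ cnt x = 2) ∧
    (univ.filter (fun x : X => cnt x = 2)).card = 6 ∧
    (univ.filter (fun x : X => cnt x = 1)).card = 6 := by
  have hinv : Function.Involutive σ := hσinv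
  have hinj : Function.Injective σ := hinv.injective
  set a : X → ℕ := pairCnt M₁ M₂ M₃ with ha
  have k1 : ∀ x, σ x ∈ M₁ ↔ x ∉ M₁ := fun x => by have := hM₁ x; tauto
  have k2 : ∀ x, σ x ∈ M₂ ↔ x ∉ M₂ := fun x => by have := hM₂ x; tauto
  have k3 : ∀ x, σ x ∈ M₃ ↔ x ∉ M₃ := fun x => by have := hM₃ x; tauto
  -- pointwise lower bound
  have hge : ∀ x, 1 ≤ a x + a (σ x) := by
    intro x
    simp only [ha, pairCnt, mem_inter, k1, k2, k3]
    by_cases h1 : x ∈ M₁ <;> by_cases h2 : x ∈ M₂ <;> by_cases h3 : x ∈ M₃ <;>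
      simp [h1, h2, h3]
  -- sum over σ equals sum
  have hperm : ∑ x : X, a (σ x) = ∑ x : X, a x :=
    Fintype.sum_equiv (hinv.toPerm σ) _ _ (fun x => rfl)
  -- sum of a equals sum of pairwise intersection cards
  have hsa : ∑ x : X, a x = (M₁ ∩ M₂).card + (M₁ ∩ M₃).card + (M₂ ∩ M₃).card := by
    have hsumS : ∀ S : Finset X, (∑ x : X, if x ∈ S then 1 else 0) = S.card := by
      intro S
      simp [Finset.sum_ite_mem]
    simp only [ha, pairCnt, Finset.sum_add_distrib, hsumS]
  have hlow : 12 ≤ ∑ x : X, (a x + a (σ x)) := by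
    calc (12 : ℕ) = ∑ _x : X, 1 := by simp [hX]
    _ ≤ ∑ x : X, (a x + a (σ x)) := Finset.sum_le_sum (fun i _ => hge i)
  have hsum2 : ∑ x : X, (a x + a (σ x)) = 2 * ∑ x : X, a x := by
    rw [Finset.sum_add_distrib, hperm]; ring
  have hs6 : ∑ x : X, a x = 6 := by omega
  have hcards : (M₁ ∩ M₂).card = 2 ∧ (M₁ ∩ M₃).card = 2 ∧ (M₂ ∩ M₃).card = 2 := by
    omega
  -- equality pointwise
  have heq : ∀ x, a x + a (σ x) = 1 := by
    by_contra hc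
    push_neg at hc
    obtain ⟨x0, hx0⟩ := hc
    have : ∑ _x : X, 1 < ∑ x : X, (a x + a (σ x)) := by
      refine Finset.sum_lt_sum (fun i _ => hge i) ⟨x0, mem_univ x0, ?_⟩
      have := hge x0; omega
    simp [hX] at this
    omega
  have hale : ∀ x, a x ≤ 1 := fun x => by have := heq x; omega
  -- triple intersection empty
  have htriple : M₁ ∩ M₂ ∩ M₃ = ∅ := by
    ext x
    simp only [mem_inter, notMem_empty, iff_false]
    rintro ⟨⟨h1, h2⟩, h3⟩
    have := hale x
    simp [ha, pairCnt, h1, h2, h3] at this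
  -- cnt values
  have hcnt12 : ∀ x, cnt x = 1 ∨ cnt x = 2 := by
    intro x
    have hax := heq x
    simp only [ha, pairCnt, mem_inter, k1, k2, k3] at hax
    rw [hcnt x]
    by_cases h1 : x ∈ M₁ <;> by_cases h2 : x ∈ M₂ <;> by_cases h3 : x ∈ M₃ <;>
      simp [h1, h2, h3] at hax ⊢
  -- cnt x + cnt (σ x) = 3
  have hc3 : ∀ x, cnt x + cnt (σ x) = 3 := by
    intro x
    rw [hcnt x, hcnt (σ x)]
    simp only [k1, k2, k3]
    by_cases h1 : x ∈ M₁ <;> by_cases h2 : x ∈ M₂ <;> by_cases h3 : x ∈ M₃ <;>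
      simp [h1, h2, h3]
  -- the two filters have equal card
  have hbij : (univ.filter (fun x : X => cnt x = 1)).card
      = (univ.filter (fun x : X => cnt x = 2)).card := by
    apply Finset.card_bij (fun x _ => σ x)
    · intro x hx
      simp only [mem_filter, mem_univ, true_and] at hx ⊢
      have := hc3 x; omega
    · intro x hx y hy h; exact hinj h
    · intro y hy
      simp only [mem_filter, mem_univ, true_and] at hy
      refine ⟨σ y, ?_, hσinv y⟩
      simp only [mem_filter, mem_univ, true_and]
      have := hc3 y; omega
  have hunion : (univ.filter (fun x : X => cnt x = 1)).card
      + (univ.filter (fun x : X => cnt x = 2)).card = 12 := by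
    rw [← Finset.card_union_of_disjoint]
    · rw [← hX]
      congr 1
      ext x
      simp only [mem_union, mem_filter, mem_univ, true_and, iff_true]
      exact hcnt12 x
    · rw [Finset.disjoint_filter]
      intro x _ h1 h2
      omega
  exact ⟨hcards.1, hcards.2.1, hcards.2.2, htriple, hcnt12, by omega, by omega⟩
end

section
/- Suppose |M_α ∩ M_β| ≤ 2 for all 1 ≤ α < β ≤ 4. Then |M_α ∩ M_β| = 2 for every one of the six pairs, and every element of X belongs to exactly two of the four sets. -/
open Finset

/-- In dimension twelve (`|X| = 12`, `d = 6`): if four admissible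
subsets have pairwise intersections of size at most 2, then every one of the six
pairwise intersections has size exactly 2, and every element of `X` belongs to exactly
two of the four sets. -/
theorem twelve_dim_four_spinors {X : Type*} [Fintype X] [DecidableEq X]
    (hX : Fintype.card X = 12)
    (σ : X → X) (hσinv : ∀ x, σ (σ x) = x) (hσfpf : ∀ x, σ x ≠ x)
    (M : Fin 4 → Finset X)
    (hM : ∀ α, ∀ x : X, x ∈ M α ↔ σ x ∉ M α)
    (he : ∀ α β : Fin 4, α < β → (M α ∩ M β).card ≤ 2) :
    (∀ α β : Fin 4, α < β → (M α ∩ M β).card = 2) ∧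
    (∀ x : X, (univ.filter (fun α : Fin 4 => x ∈ M α)).card = 2) := by
  classical
  set S : X → Finset (Fin 4) := fun x => univ.filter (fun α => x ∈ M α) with hS
  have aux : ∀ s : Finset (Fin 4),
      ((if (0:Fin 4) ∈ s ∧ (1:Fin 4) ∈ s then 1 else 0) +
       (if (0:Fin 4) ∈ s ∧ (2:Fin 4) ∈ s then 1 else 0) +
       (if (0:Fin 4) ∈ s ∧ (3:Fin 4) ∈ s then 1 else 0) +
       (if (1:Fin 4) ∈ s ∧ (2:Fin 4) ∈ s then 1 else 0) +
       (if (1:Fin 4) ∈ s ∧ (3:Fin 4) ∈ s then 1 else 0) +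
       (if (2:Fin 4) ∈ s ∧ (3:Fin 4) ∈ s then 1 else 0) : ℕ) = s.card.choose 2 := by
    decide
  have aux2 : ∀ a b : ℕ, a + b = 4 → 2 ≤ a.choose 2 + b.choose 2 := by
    intro a b h
    have ha : a ≤ 4 := by omega
    have hb : b ≤ 4 := by omega
    interval_cases a <;> interval_cases b <;> first | (exfalso; omega) | decide
  have aux3 : ∀ a b : ℕ, a + b = 4 → a ≠ 2 → 2 < a.choose 2 + b.choose 2 := by
    intro a b h hne
    have ha : a ≤ 4 := by omega
    have hb : b ≤ 4 := by omega
    interval_cases a <;> interval_cases b <;> first | (exfalso; omega) | decide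
  -- complementarity : #S x + #S (σ x) = 4
  have hcompl : ∀ x, (S x).card + (S (σ x)).card = 4 := by
    intro x
    have h1 : S (σ x) = univ.filter (fun α => ¬ x ∈ M α) := by
      ext α
      have := hM α (σ x)
      rw [hσinv] at this
      simp [hS, this]
    rw [h1]
    have := Finset.card_filter_add_card_filter_not (s := (univ : Finset (Fin 4)))
      (p := fun α => x ∈ M α)
    simpa [hS] using this
  -- each pairwise intersection card as a sum of indicators
  have hc : ∀ α β : Fin 4, (M α ∩ M β).card =
      ∑ x : X, (if x ∈ M α ∧ x ∈ M β then 1 else 0) := by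
    intro α β
    have h1 : M α ∩ M β = univ.filter (fun x => x ∈ M α ∧ x ∈ M β) := by
      ext x; simp
    rw [h1, Finset.card_filter]
  set T : ℕ := ∑ x : X, ((S x).card.choose 2) with hT
  have hE : (M 0 ∩ M 1).card + (M 0 ∩ M 2).card + (M 0 ∩ M 3).card +
      (M 1 ∩ M 2).card + (M 1 ∩ M 3).card + (M 2 ∩ M 3).card = T := by
    rw [hT]
    simp only [hc, ← Finset.sum_add_distrib]
    refine Finset.sum_congr rfl (fun x _ => ?_)
    have := aux (S x)
    simpa [hS] using this
  -- reindexing sum along σ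
  have hinv : Function.Involutive σ := hσinv
  have hre : ∑ x : X, ((S (σ x)).card.choose 2) = T := by
    rw [hT]
    exact Equiv.sum_comp (hinv.toPerm σ) (fun x => (S x).card.choose 2)
  have hdouble : ∑ x : X, ((S x).card.choose 2 + (S (σ x)).card.choose 2) = 2 * T := by
    rw [Finset.sum_add_distrib, hre, ← hT]; ring
  have hge : 24 ≤ 2 * T := by
    rw [← hdouble]
    calc (24 : ℕ) = ∑ _x : X, 2 := by
          simp [Finset.sum_const, Finset.card_univ, hX]
      _ ≤ ∑ x : X, ((S x).card.choose 2 + (S (σ x)).card.choose 2) :=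
          Finset.sum_le_sum (fun x _ => aux2 _ _ (hcompl x))
  have hle : T ≤ 12 := by
    have h01 := he 0 1 (by decide)
    have h02 := he 0 2 (by decide)
    have h03 := he 0 3 (by decide)
    have h12 := he 1 2 (by decide)
    have h13 := he 1 3 (by decide)
    have h23 := he 2 3 (by decide)
    omega
  have hT12 : T = 12 := by omega
  -- pointwise: every x lies in exactly two sets
  have hpt : ∀ x : X, (S x).card = 2 := by
    intro x
    by_contra hne
    have hlt : (2 : ℕ) < (S x).card.choose 2 + (S (σ x)).card.choose 2 :=
      aux3 _ _ (hcompl x) hne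
    have : ∑ _x : X, 2 < ∑ x : X, ((S x).card.choose 2 + (S (σ x)).card.choose 2) :=
      Finset.sum_lt_sum (fun y _ => aux2 _ _ (hcompl y)) ⟨x, Finset.mem_univ x, hlt⟩
    rw [hdouble, hT12] at this
    simp only [Finset.sum_const, Finset.card_univ, hX, smul_eq_mul] at this
    omega
  constructor
  · have h01 := he 0 1 (by decide)
    have h02 := he 0 2 (by decide)
    have h03 := he 0 3 (by decide)
    have h12 := he 1 2 (by decide)
    have h13 := he 1 3 (by decide)
    have h23 := he 2 3 (by decide)
    rw [hT12] at hE
    have e01 : (M 0 ∩ M 1).card = 2 := by omega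
    have e02 : (M 0 ∩ M 2).card = 2 := by omega
    have e03 : (M 0 ∩ M 3).card = 2 := by omega
    have e12 : (M 1 ∩ M 2).card = 2 := by omega
    have e13 : (M 1 ∩ M 3).card = 2 := by omega
    have e23 : (M 2 ∩ M 3).card = 2 := by omega
    intro α β hαβ
    fin_cases α <;> fin_cases β <;>
      first
        | exact absurd hαβ (by decide)
        | exact e01 | exact e02 | exact e03 | exact e12 | exact e13 | exact e23
  · intro x
    simpa [hS] using hpt x
end

section
/- Suppose |M_α ∩ M_β| ≤ 3 for all 1 ≤ α < β ≤ 3, and let s = |M_1 ∩ M_2| + |M_1 ∩ M_3| + |M_2 ∩ M_3|. Then s = 7 + 2·|M_1 ∩ M_2 ∩ M_3|, and consequently either s = 7 and the triple intersection M_1 ∩ M_2 ∩ M_3 is empty, or s = 9, in which case each of the three pairwise intersections has exactly 3 elements and the triple intersection consists of exactly one element. -/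
open Finset

lemma sigma_compl_card {X : Type*} [Fintype X] [DecidableEq X]
    (σ : X → X) (hσinv : ∀ x, σ (σ x) = x) (σinj : Function.Injective σ)
    (S : Finset X) (hS : ∀ x : X, x ∈ S ↔ σ x ∉ S) : Sᶜ.card = S.card := by
  have himg : Finset.image σ Sᶜ = S := by
    ext x
    simp only [Finset.mem_image, Finset.mem_compl]
    constructor
    · rintro ⟨y, hy, rfl⟩
      rw [hS (σ y), hσinv]; exact hy
    · intro hx
      exact ⟨σ x, (hS x).mp hx, hσinv x⟩
  calc Sᶜ.card = (Finset.image σ Sᶜ).card := (Finset.card_image_of_injective _ σinj).symm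
    _ = S.card := by rw [himg]

/-- In dimension fourteen (`|X| = 14`, `d = 7`): if three admissible
subsets have pairwise intersections of size at most 3, and
`s = |M₁ ∩ M₂| + |M₁ ∩ M₃| + |M₂ ∩ M₃|`, then `s = 7 + 2 * |M₁ ∩ M₂ ∩ M₃|`, and
consequently either `s = 7` and the triple intersection is empty, or `s = 9`, in which
case each pairwise intersection has exactly 3 elements and the triple intersection
consists of exactly one element. -/
theorem fourteen_dim_three_spinors {X : Type*} [Fintype X] [DecidableEq X]
    (hX : Fintype.card X = 14)
    (σ : X → X) (hσinv : ∀ x, σ (σ x) = x) (hσfpf : ∀ x, σ x ≠ x)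
    (M₁ M₂ M₃ : Finset X)
    (hM₁ : ∀ x : X, x ∈ M₁ ↔ σ x ∉ M₁)
    (hM₂ : ∀ x : X, x ∈ M₂ ↔ σ x ∉ M₂)
    (hM₃ : ∀ x : X, x ∈ M₃ ↔ σ x ∉ M₃)
    (h₁₂ : (M₁ ∩ M₂).card ≤ 3) (h₁₃ : (M₁ ∩ M₃).card ≤ 3) (h₂₃ : (M₂ ∩ M₃).card ≤ 3)
    (s : ℕ) (hs : s = (M₁ ∩ M₂).card + (M₁ ∩ M₃).card + (M₂ ∩ M₃).card) :
    s = 7 + 2 * (M₁ ∩ M₂ ∩ M₃).card ∧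
    ((s = 7 ∧ M₁ ∩ M₂ ∩ M₃ = ∅) ∨
      (s = 9 ∧ (M₁ ∩ M₂).card = 3 ∧ (M₁ ∩ M₃).card = 3 ∧ (M₂ ∩ M₃).card = 3 ∧
        (M₁ ∩ M₂ ∩ M₃).card = 1)) := by
  have σinj : Function.Injective σ := Function.LeftInverse.injective hσinv
  -- each Mᵢ has 7 elements
  have hc : ∀ M : Finset X, (∀ x : X, x ∈ M ↔ σ x ∉ M) → M.card = 7 := by
    intro M hM
    have h1 := sigma_compl_card σ hσinv σinj M hM
    have h2 : M.card + Mᶜ.card = Fintype.card X := Finset.card_add_card_compl M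
    omega
  have hc₁ := hc M₁ hM₁
  have hc₂ := hc M₂ hM₂
  have hc₃ := hc M₃ hM₃
  -- the complement of the union maps onto the triple intersection
  have hcompl : (M₁ ∪ M₂ ∪ M₃)ᶜ.card = (M₁ ∩ M₂ ∩ M₃).card := by
    have himg : Finset.image σ (M₁ ∪ M₂ ∪ M₃)ᶜ = M₁ ∩ M₂ ∩ M₃ := by
      ext x
      simp only [Finset.mem_image, Finset.mem_compl, Finset.mem_union, Finset.mem_inter,
        not_or]
      constructor
      · rintro ⟨y, ⟨⟨h1, h2⟩, h3⟩, rfl⟩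
        refine ⟨⟨?_, ?_⟩, ?_⟩
        · rw [hM₁ (σ y), hσinv]; exact h1
        · rw [hM₂ (σ y), hσinv]; exact h2
        · rw [hM₃ (σ y), hσinv]; exact h3
      · rintro ⟨⟨h1, h2⟩, h3⟩
        exact ⟨σ x, ⟨⟨(hM₁ x).mp h1, (hM₂ x).mp h2⟩, (hM₃ x).mp h3⟩, hσinv x⟩
    calc (M₁ ∪ M₂ ∪ M₃)ᶜ.card = (Finset.image σ (M₁ ∪ M₂ ∪ M₃)ᶜ).card :=
          (Finset.card_image_of_injective _ σinj).symm
      _ = (M₁ ∩ M₂ ∩ M₃).card := by rw [himg]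
  -- inclusion–exclusion bookkeeping
  have e1 : (M₁ ∪ M₂ ∪ M₃).card + ((M₁ ∪ M₂) ∩ M₃).card = (M₁ ∪ M₂).card + M₃.card :=
    Finset.card_union_add_card_inter _ _
  have e2 : (M₁ ∪ M₂).card + (M₁ ∩ M₂).card = M₁.card + M₂.card :=
    Finset.card_union_add_card_inter _ _
  have e3 : ((M₁ ∩ M₃) ∪ (M₂ ∩ M₃)).card + ((M₁ ∩ M₃) ∩ (M₂ ∩ M₃)).card
      = (M₁ ∩ M₃).card + (M₂ ∩ M₃).card := Finset.card_union_add_card_inter _ _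
  have e4 : (M₁ ∪ M₂) ∩ M₃ = (M₁ ∩ M₃) ∪ (M₂ ∩ M₃) := Finset.union_inter_distrib_right ..
  have e5 : (M₁ ∩ M₃) ∩ (M₂ ∩ M₃) = M₁ ∩ M₂ ∩ M₃ := by ext x; simp only [Finset.mem_inter]; tauto
  have e6 : (M₁ ∪ M₂ ∪ M₃).card + (M₁ ∪ M₂ ∪ M₃)ᶜ.card = Fintype.card X :=
    Finset.card_add_card_compl _
  rw [e4] at e1
  rw [e5] at e3
  have key : s = 7 + 2 * (M₁ ∩ M₂ ∩ M₃).card := by omega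
  refine ⟨key, ?_⟩
  rcases Nat.eq_zero_or_pos (M₁ ∩ M₂ ∩ M₃).card with h0 | h0
  · exact Or.inl ⟨by omega, Finset.card_eq_zero.mp h0⟩
  · have h1 : (M₁ ∩ M₂ ∩ M₃).card = 1 := by omega
    have le12 : (M₁ ∩ M₂ ∩ M₃).card ≤ (M₁ ∩ M₂).card :=
      Finset.card_le_card (Finset.inter_subset_left)
    have le13 : (M₁ ∩ M₂ ∩ M₃).card ≤ (M₁ ∩ M₃).card := by
      apply Finset.card_le_card; intro x; simp only [Finset.mem_inter]; tauto
    have le23 : (M₁ ∩ M₂ ∩ M₃).card ≤ (M₂ ∩ M₃).card := by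
      apply Finset.card_le_card; intro x; simp only [Finset.mem_inter]; tauto
    exact Or.inr ⟨by omega, by omega, by omega, by omega, h1⟩
end

section
/- Suppose that every pairwise intersection |M_α ∩ M_β| (1 ≤ α < β ≤ 5) has odd cardinality at most 3, and that no element of X belongs to four or more of the five sets. Then exactly nine of the ten pairs satisfy |M_α ∩ M_β| = 3 and exactly one pair satisfies |M_α ∩ M_β| = 1; moreover, every element of X belongs to exactly two or exactly three of the five sets, with exactly 7 elements belonging to exactly three of them and exactly 7 elements belonging to exactly two. -/
open Finset

lemma pairs_card : ∀ S : Finset (Fin 5),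
    ((univ : Finset (Fin 5 × Fin 5)).filter (fun p => p.1 < p.2 ∧ p.1 ∈ S ∧ p.2 ∈ S)).card
      = S.card * (S.card - 1) / 2 := by decide


/-- In dimension fourteen (`|X| = 14`, `d = 7`): suppose five
admissible subsets are such that every pairwise intersection has odd cardinality at
most 3, and no element of `X` belongs to four or more of the five sets. Then exactly
nine of the ten pairs have intersection of size 3 and exactly one pair has intersection
of size 1; moreover every element belongs to exactly two or exactly three of the five
sets, with exactly 7 elements belonging to exactly three of them and exactly 7 elements
belonging to exactly two. -/
theorem fourteen_dim_five_spinors {X : Type*} [Fintype X] [DecidableEq X]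
    (hX : Fintype.card X = 14)
    (σ : X → X) (hσinv : ∀ x, σ (σ x) = x) (hσfpf : ∀ x, σ x ≠ x)
    (M : Fin 5 → Finset X)
    (hM : ∀ α, ∀ x : X, x ∈ M α ↔ σ x ∉ M α)
    (he : ∀ α β : Fin 5, α < β →
      Odd (M α ∩ M β).card ∧ (M α ∩ M β).card ≤ 3)
    (hocc : ∀ x : X, (univ.filter (fun α : Fin 5 => x ∈ M α)).card ≤ 3) :
    (univ.filter (fun p : Fin 5 × Fin 5 => p.1 < p.2 ∧ (M p.1 ∩ M p.2).card = 3)).card = 9 ∧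
    (univ.filter (fun p : Fin 5 × Fin 5 => p.1 < p.2 ∧ (M p.1 ∩ M p.2).card = 1)).card = 1 ∧
    (∀ x : X, (univ.filter (fun α : Fin 5 => x ∈ M α)).card = 2 ∨
      (univ.filter (fun α : Fin 5 => x ∈ M α)).card = 3) ∧
    (univ.filter (fun x : X => (univ.filter (fun α : Fin 5 => x ∈ M α)).card = 3)).card = 7 ∧
    (univ.filter (fun x : X => (univ.filter (fun α : Fin 5 => x ∈ M α)).card = 2)).card = 7 := by
  set n : X → ℕ := fun x => (univ.filter (fun α : Fin 5 => x ∈ M α)).card with hn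
  -- n x + n (σ x) = 5
  have hsum5 : ∀ x, n x + n (σ x) = 5 := by
    intro x
    have hcompl : (univ.filter (fun α : Fin 5 => σ x ∈ M α))
        = (univ.filter (fun α : Fin 5 => x ∈ M α))ᶜ := by
      ext α
      simp only [mem_filter, mem_univ, true_and, mem_compl]
      constructor
      · intro h h'
        exact (hM α x).mp h' h
      · intro h
        by_contra h'
        exact h ((hM α x).mpr h')
    simp only [hn, hcompl]
    rw [Finset.card_add_card_compl]
    simp
  have hocc' : ∀ x, n x ≤ 3 := hocc
  have h23 : ∀ x, n x = 2 ∨ n x = 3 := by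
    intro x
    have h1 := hocc' x
    have h2 := hocc' (σ x)
    have h3 := hsum5 x
    omega
  -- card of n=3 set equals card of n=2 set
  have hA2 : ∀ x, n x = 3 → n (σ x) = 2 := fun x h => by have := hsum5 x; omega
  have hB3 : ∀ x, n x = 2 → n (σ x) = 3 := fun x h => by have := hsum5 x; omega
  have hcardA : (univ.filter (fun x : X => n x = 3)).card
      = (univ.filter (fun x : X => n x = 2)).card := by
    apply Finset.card_bij (fun x _ => σ x)
    · intro x hx
      simp only [mem_filter, mem_univ, true_and] at hx ⊢
      exact hA2 x hx
    · intro a ha b hb h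
      have := congrArg σ h
      rwa [hσinv, hσinv] at this
    · intro y hy
      simp only [mem_filter, mem_univ, true_and] at hy
      exact ⟨σ y, by simp only [mem_filter, mem_univ, true_and, hσinv]; exact hB3 y hy, hσinv y⟩
  have hABc : (univ.filter (fun x : X => n x = 2))
      = (univ.filter (fun x : X => n x = 3))ᶜ := by
    ext x
    simp only [mem_filter, mem_univ, true_and, mem_compl]
    have := h23 x
    omega
  have hA7 : (univ.filter (fun x : X => n x = 3)).card = 7 := by
    have := Finset.card_add_card_compl (univ.filter (fun x : X => n x = 3))
    rw [hX, ← hABc, ← hcardA] at this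
    omega
  have hB7 : (univ.filter (fun x : X => n x = 2)).card = 7 := by rw [← hcardA, hA7]
  -- double count
  set P : Finset (Fin 5 × Fin 5) := univ.filter (fun p => p.1 < p.2) with hP
  have hdc : ∑ p ∈ P, (M p.1 ∩ M p.2).card = 28 := by
    have h1 : ∀ p : Fin 5 × Fin 5, (M p.1 ∩ M p.2).card
        = ∑ x : X, if x ∈ M p.1 ∧ x ∈ M p.2 then 1 else 0 := by
      intro p
      rw [← Finset.card_filter]
      congr 1
      ext x
      simp [Finset.mem_inter]
    calc ∑ p ∈ P, (M p.1 ∩ M p.2).card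
        = ∑ p ∈ P, ∑ x : X, (if x ∈ M p.1 ∧ x ∈ M p.2 then 1 else 0) := by
          exact Finset.sum_congr rfl fun p _ => h1 p
      _ = ∑ x : X, ∑ p ∈ P, (if x ∈ M p.1 ∧ x ∈ M p.2 then 1 else 0) := Finset.sum_comm
      _ = ∑ x : X, (P.filter (fun p => x ∈ M p.1 ∧ x ∈ M p.2)).card := by
          exact Finset.sum_congr rfl fun x _ => (Finset.card_filter _ _).symm
      _ = ∑ x : X, n x * (n x - 1) / 2 := by
          refine Finset.sum_congr rfl fun x _ => ?_
          have heq : P.filter (fun p => x ∈ M p.1 ∧ x ∈ M p.2)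
              = (univ : Finset (Fin 5 × Fin 5)).filter
                (fun p => p.1 < p.2 ∧ p.1 ∈ univ.filter (fun α : Fin 5 => x ∈ M α)
                  ∧ p.2 ∈ univ.filter (fun α : Fin 5 => x ∈ M α)) := by
            rw [hP, Finset.filter_filter]
            congr 1
            ext p
            simp [and_assoc]
          rw [heq, pairs_card]
      _ = 28 := by
          rw [← Finset.sum_filter_add_sum_filter_not univ (fun x => n x = 3)]
          have e1 : ∑ x ∈ univ.filter (fun x : X => n x = 3), n x * (n x - 1) / 2
              = ∑ x ∈ univ.filter (fun x : X => n x = 3), 3 := by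
            refine Finset.sum_congr rfl fun x hx => ?_
            simp only [mem_filter] at hx
            rw [hx.2]
          have e2 : ∑ x ∈ univ.filter (fun x : X => ¬ n x = 3), n x * (n x - 1) / 2
              = ∑ x ∈ univ.filter (fun x : X => ¬ n x = 3), 1 := by
            refine Finset.sum_congr rfl fun x hx => ?_
            simp only [mem_filter] at hx
            have : n x = 2 := by have := h23 x; omega
            rw [this]
          have e3 : (univ.filter (fun x : X => ¬ n x = 3)) = (univ.filter (fun x : X => n x = 2)) := by
            ext x
            simp only [mem_filter, mem_univ, true_and]
            have := h23 x
            omega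
          rw [e1, e2, e3, Finset.sum_const, Finset.sum_const, hA7, hB7]
          norm_num
  -- split P by intersection size
  have hP13 : ∀ p ∈ P, (M p.1 ∩ M p.2).card = 1 ∨ (M p.1 ∩ M p.2).card = 3 := by
    intro p hp
    simp only [hP, mem_filter, mem_univ, true_and] at hp
    obtain ⟨⟨k, hk⟩, hle⟩ := he p.1 p.2 hp
    omega
  have hcardP : P.card = 10 := by rw [hP]; decide
  set a := (univ.filter (fun p : Fin 5 × Fin 5 => p.1 < p.2 ∧ (M p.1 ∩ M p.2).card = 3)).card with ha
  set b := (univ.filter (fun p : Fin 5 × Fin 5 => p.1 < p.2 ∧ (M p.1 ∩ M p.2).card = 1)).card with hb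
  have hfa : (univ.filter (fun p : Fin 5 × Fin 5 => p.1 < p.2 ∧ (M p.1 ∩ M p.2).card = 3))
      = P.filter (fun p => (M p.1 ∩ M p.2).card = 3) := by rw [hP, Finset.filter_filter]
  have hfb : (univ.filter (fun p : Fin 5 × Fin 5 => p.1 < p.2 ∧ (M p.1 ∩ M p.2).card = 1))
      = P.filter (fun p => (M p.1 ∩ M p.2).card = 1) := by rw [hP, Finset.filter_filter]
  have e2 : P.filter (fun p => ¬ (M p.1 ∩ M p.2).card = 3)
      = P.filter (fun p => (M p.1 ∩ M p.2).card = 1) := by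
    ext p
    simp only [mem_filter]
    constructor
    · rintro ⟨hp, h3⟩; exact ⟨hp, by have := hP13 p hp; omega⟩
    · rintro ⟨hp, h1'⟩; exact ⟨hp, by omega⟩
  have hab : a + b = 10 := by
    rw [ha, hb, hfa, hfb, ← e2,
      Finset.card_filter_add_card_filter_not, hcardP]
  have hsumab : 3 * a + b = 28 := by
    rw [← hdc, ha, hb, hfa, hfb]
    rw [← Finset.sum_filter_add_sum_filter_not P (fun p => (M p.1 ∩ M p.2).card = 3)]
    have e1 : ∑ p ∈ P.filter (fun p => (M p.1 ∩ M p.2).card = 3), (M p.1 ∩ M p.2).card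
        = ∑ p ∈ P.filter (fun p => (M p.1 ∩ M p.2).card = 3), 3 :=
      Finset.sum_congr rfl fun p hp => (mem_filter.mp hp).2
    have e3 : ∑ p ∈ P.filter (fun p => (M p.1 ∩ M p.2).card = 1), (M p.1 ∩ M p.2).card
        = ∑ p ∈ P.filter (fun p => (M p.1 ∩ M p.2).card = 1), 1 :=
      Finset.sum_congr rfl fun p hp => (mem_filter.mp hp).2
    rw [e1, e2, e3, Finset.sum_const, Finset.sum_const]
    ring
  refine ⟨by omega, by omega, fun x => h23 x, hA7, hB7⟩
end

section
/- There do not exist six admissible subsets M_1, …, M_6 of X such that every pairwise intersection |M_α ∩ M_β| (1 ≤ α < β ≤ 6) has odd cardinality at most 3 and no element of X belongs to four or more of the six sets. -/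
open Finset

lemma aux_pairs_card : ∀ s : Finset (Fin 6), s.card = 3 →
    ((s ×ˢ s).filter (fun p => p.1 < p.2)).card = 3 := by decide

lemma aux_P_card :
    ((univ ×ˢ univ : Finset (Fin 6 × Fin 6)).filter (fun p => p.1 < p.2)).card = 15 := by
  decide

/-- In dimension fourteen (`|X| = 14`, `d = 7`): there do not exist
six admissible subsets such that every pairwise intersection has odd cardinality at
most 3 and no element of `X` belongs to four or more of the six sets. -/
theorem fourteen_dim_no_six_spinors {X : Type*} [Fintype X] [DecidableEq X]
    (hX : Fintype.card X = 14)
    (σ : X → X) (hσinv : ∀ x, σ (σ x) = x) (hσfpf : ∀ x, σ x ≠ x) :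
    ¬ ∃ M : Fin 6 → Finset X,
      (∀ α, ∀ x : X, x ∈ M α ↔ σ x ∉ M α) ∧
      (∀ α β : Fin 6, α < β → Odd (M α ∩ M β).card ∧ (M α ∩ M β).card ≤ 3) ∧
      (∀ x : X, (univ.filter (fun α : Fin 6 => x ∈ M α)).card ≤ 3) := by
  rintro ⟨M, hadm, hpair, hcov⟩
  have hinj : Function.Injective σ := Function.LeftInverse.injective hσinv
  -- each M α has 7 elements
  have hMcard : ∀ α, (M α).card = 7 := by
    intro α
    have himg : (M α).image σ = (M α)ᶜ := by
      ext y
      simp only [mem_image, mem_compl]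
      constructor
      · rintro ⟨x, hx, rfl⟩
        intro hy
        exact (hadm α (σ x)).mp hy (by rwa [hσinv])
      · intro hy
        exact ⟨σ y, by rw [hadm α (σ y), hσinv]; exact hy, hσinv y⟩
    have h1 := Finset.card_image_of_injective (M α) hinj
    have h2 := Finset.card_compl (M α)
    rw [himg, h2, hX] at h1
    omega
  -- everyone is covered exactly 3 times
  have hsum : ∑ x : X, (univ.filter (fun α : Fin 6 => x ∈ M α)).card
      = ∑ x : X, 3 := by
    have hL : ∑ x : X, (univ.filter (fun α : Fin 6 => x ∈ M α)).card
        = ∑ α : Fin 6, (M α).card := by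
      simp only [Finset.card_filter]
      rw [Finset.sum_comm]
      refine Finset.sum_congr rfl fun α _ => ?_
      rw [Finset.sum_ite_mem, Finset.univ_inter, Finset.sum_const, smul_eq_mul, mul_one]
    rw [hL]
    simp [hMcard, Finset.sum_const, card_univ, hX]
  have hcov3 : ∀ x : X, (univ.filter (fun α : Fin 6 => x ∈ M α)).card = 3 := by
    have := (Finset.sum_eq_sum_iff_of_le (fun x _ => hcov x)).mp hsum
    exact fun x => this x (mem_univ x)
  -- the pair set
  set P : Finset (Fin 6 × Fin 6) :=
    (univ ×ˢ univ).filter (fun p => p.1 < p.2) with hP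
  -- double count
  have hS : ∑ p ∈ P, (M p.1 ∩ M p.2).card = 42 := by
    have h1 : ∀ p : Fin 6 × Fin 6, (M p.1 ∩ M p.2).card
        = ∑ x : X, if x ∈ M p.1 ∧ x ∈ M p.2 then 1 else 0 := by
      intro p
      rw [← Finset.card_filter]
      congr 1
      ext x
      simp [Finset.mem_inter]
    calc ∑ p ∈ P, (M p.1 ∩ M p.2).card
        = ∑ p ∈ P, ∑ x : X, if x ∈ M p.1 ∧ x ∈ M p.2 then 1 else 0 := by
          exact Finset.sum_congr rfl fun p _ => h1 p
      _ = ∑ x : X, ∑ p ∈ P, if x ∈ M p.1 ∧ x ∈ M p.2 then 1 else 0 :=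
          Finset.sum_comm
      _ = ∑ x : X, 3 := by
          refine Finset.sum_congr rfl fun x _ => ?_
          rw [← Finset.card_filter]
          have he : P.filter (fun p => x ∈ M p.1 ∧ x ∈ M p.2)
              = (((univ.filter (fun α : Fin 6 => x ∈ M α)) ×ˢ
                  (univ.filter (fun α : Fin 6 => x ∈ M α))).filter
                  (fun p => p.1 < p.2)) := by
            ext p
            simp only [hP, Finset.mem_filter, Finset.mem_product, Finset.mem_univ,
              true_and]
            tauto
          rw [he]
          exact aux_pairs_card _ (hcov3 x)
      _ = 42 := by simp [Finset.sum_const, card_univ, hX]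
  -- parity contradiction
  have hodd : (∑ p ∈ P, (M p.1 ∩ M p.2).card) % 2 = 1 := by
    rw [Finset.sum_nat_mod]
    have : ∀ p ∈ P, (M p.1 ∩ M p.2).card % 2 = 1 := by
      intro p hp
      have hlt : p.1 < p.2 := (Finset.mem_filter.mp hp).2
      exact Nat.odd_iff.mp (hpair p.1 p.2 hlt).1
    rw [Finset.sum_congr rfl this, Finset.sum_const, smul_eq_mul, mul_one, aux_P_card]
  rw [hS] at hodd
  omega
end
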